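/- arXiv:1301.6321 — 3 statements merged into one kernel-verified Lean document; each statement's English description precedes it below -/
import Mathlib

section
/- Assume hypotheses (EC), (BB), (ET). Then the map τ ↦ M^τ is strictly monotonically increasing and continuous from [0,T) to [M^0,∞), and lim_{τ→T⁻} M^τ = ∞. -/
open MeasureTheory Set Filter Topology

set_option linter.unusedSectionVars false
noncomputable section

variable {H : Type*} [NormedAddCommGroup H] [InnerProductSpace ℂ H] [CompleteSpace H]
  [SecondCountableTopology H]

/-- `U` is a strongly continuous one-parameter group of unitary operators on `H`,
abstracting the Schrödinger group `e^{-iΔt}`. -/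
def IsUnitaryGroup (U : ℝ → H →L[ℂ] H) : Prop :=
  U 0 = ContinuousLinearMap.id ℂ H ∧
  (∀ s t : ℝ, U (s + t) = (U s).comp (U t)) ∧
  (∀ (t : ℝ) (x : H), ‖U t x‖ = ‖x‖) ∧
  ∀ x : H, Continuous fun t : ℝ => U t x

/-- `B` is a nonzero orthogonal projection on `H`, abstracting multiplication by `χ_ω`. -/
def IsOrthProj (B : H →L[ℂ] H) : Prop :=
  B ≠ 0 ∧ B.comp B = B ∧ ∀ x y : H, (inner ℂ (B x) y : ℂ) = inner ℂ x (B y)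

/-- Membership in `L∞((a,b);H)`. -/
def MemLinfty (u : ℝ → H) (a b : ℝ) : Prop :=
  AEStronglyMeasurable u (volume : Measure ℝ) ∧
    ∃ c : ℝ, ∀ᵐ t : ℝ ∂volume, t ∈ Ioo a b → ‖u t‖ ≤ c

/-- Membership in `L∞((0,∞);H)`. -/
def MemLinftyInf (u : ℝ → H) : Prop :=
  AEStronglyMeasurable u (volume : Measure ℝ) ∧
    ∃ c : ℝ, ∀ᵐ t : ℝ ∂volume, t ∈ Ioi (0 : ℝ) → ‖u t‖ ≤ c

/-- The `L∞((a,b);H)` norm of `u`. -/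
def supNorm (u : ℝ → H) (a b : ℝ) : ℝ :=
  sInf {c : ℝ | 0 ≤ c ∧ ∀ᵐ t : ℝ ∂volume, t ∈ Ioo a b → ‖u t‖ ≤ c}

/-- `stateT U B T τ u y₀ = y(T; χ_{(τ,T)}u, y₀)`, the mild solution at time `T` of the
controlled Schrödinger equation with initial state `y₀`, the control acting on `(τ,T)`:
`y(T) = U(T)y₀ + ∫_τ^T U(T-s) B u(s) ds`.  The free state at time `t` starting from `y₀`
with control `u` active from time `0` is `stateT U B t 0 u y₀`. -/
def stateT (U : ℝ → H →L[ℂ] H) (B : H →L[ℂ] H) (T τ : ℝ) (u : ℝ → H) (y₀ : H) : H :=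
  U T y₀ + ∫ s in Ioo τ T, U (T - s) (B (u s))

/-- Hypothesis (EC): `L∞`-exact controllability with cost. -/
def EC (U : ℝ → H →L[ℂ] H) (B : H →L[ℂ] H) : Prop :=
  ∀ τ : ℝ, 0 < τ → ∃ C : ℝ, 0 < C ∧ ∀ y₀ z : H, ∃ u : ℝ → H,
    AEStronglyMeasurable u (volume : Measure ℝ) ∧
    (∀ᵐ t : ℝ ∂volume, t ∈ Ioo 0 τ → ‖u t‖ ≤ C * ‖z - U τ y₀‖) ∧
    stateT U B τ 0 u y₀ = z

/-- Hypothesis (UC): unique continuation. -/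
def UC (U : ℝ → H →L[ℂ] H) (B : H →L[ℂ] H) : Prop :=
  ∀ η : H, η ≠ 0 → volume {t : ℝ | B (U t η) = 0} = 0

/-- The admissible set `U_M` of the minimal time problem `(TOCP)_M`. -/
def UMset (U : ℝ → H →L[ℂ] H) (B : H →L[ℂ] H) (y₀ : H) (M : ℝ) : Set (ℝ → H) :=
  {u | MemLinftyInf u ∧ (∀ᵐ t : ℝ ∂volume, t ∈ Ioi (0 : ℝ) → ‖u t‖ ≤ M) ∧
    ∃ s : ℝ, 0 < s ∧ stateT U B s 0 u y₀ = 0}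

/-- The minimal time `T_M` of `(TOCP)_M`. -/
def Tmin (U : ℝ → H →L[ℂ] H) (B : H →L[ℂ] H) (y₀ : H) (M : ℝ) : ℝ :=
  sInf {s : ℝ | 0 < s ∧ ∃ u ∈ UMset U B y₀ M, stateT U B s 0 u y₀ = 0}

/-- The admissible set `V_T` of the minimal norm problem `(NOCP)_T`. -/
def VTset (U : ℝ → H →L[ℂ] H) (B : H →L[ℂ] H) (y₀ : H) (T : ℝ) : Set (ℝ → H) :=
  {v | MemLinfty v 0 T ∧ stateT U B T 0 v y₀ = 0}

/-- The minimal norm `M_T` of `(NOCP)_T`. -/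
def Mmin (U : ℝ → H →L[ℂ] H) (B : H →L[ℂ] H) (y₀ : H) (T : ℝ) : ℝ :=
  sInf ((fun v : ℝ → H => supNorm v 0 T) '' VTset U B y₀ T)

/-- Hypothesis (BB): bang-bang property of the minimal time problems. -/
def BB (U : ℝ → H →L[ℂ] H) (B : H →L[ℂ] H) : Prop :=
  ∀ y₀ : H, y₀ ≠ 0 → ∀ M : ℝ, 0 < M → ∀ u ∈ UMset U B y₀ M,
    stateT U B (Tmin U B y₀ M) 0 u y₀ = 0 →
    ∀ᵐ t : ℝ ∂volume, t ∈ Ioo 0 (Tmin U B y₀ M) → ‖u t‖ = M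

/-- Hypothesis (ET): existence of optimal controls for the minimal time problems. -/
def ET (U : ℝ → H →L[ℂ] H) (B : H →L[ℂ] H) : Prop :=
  ∀ y₀ : H, y₀ ≠ 0 → ∀ M : ℝ, 0 < M →
    ∃ u ∈ UMset U B y₀ M, stateT U B (Tmin U B y₀ M) 0 u y₀ = 0

/-- The admissible set `U_{M,τ}`. -/
def UadmSet (M τ T : ℝ) : Set (ℝ → H) :=
  {u | MemLinfty u 0 T ∧ ∀ᵐ t : ℝ ∂volume, t ∈ Ioo τ T → ‖u t‖ ≤ M}

/-- The optimal distance `r(M,τ)` of the optimal target problem `(OP)^{M,τ}`. -/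
def rOP (U : ℝ → H →L[ℂ] H) (B : H →L[ℂ] H) (y₀ z_d : H) (T M τ : ℝ) : ℝ :=
  sInf ((fun u : ℝ → H => ‖stateT U B T τ u y₀ - z_d‖) '' UadmSet M τ T)

/-- `u` is an optimal control to `(OP)^{M,τ}`. -/
def IsOptOP (U : ℝ → H →L[ℂ] H) (B : H →L[ℂ] H) (y₀ z_d : H) (T M τ : ℝ) (u : ℝ → H) :
    Prop :=
  u ∈ UadmSet M τ T ∧ ‖stateT U B T τ u y₀ - z_d‖ = rOP U B y₀ z_d T M τ

/-- `M^τ`, the minimal norm for exact steering to the target `z_d`. -/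
def Mtau (U : ℝ → H →L[ℂ] H) (B : H →L[ℂ] H) (y₀ z_d : H) (T τ : ℝ) : ℝ :=
  sInf ((fun u : ℝ → H => supNorm u τ T) ''
    {u : ℝ → H | MemLinfty u 0 T ∧ stateT U B T τ u y₀ = z_d})

/-- The admissible set `W_{τ,r}` of the optimal norm problem `(NP)^{τ,r}`. -/
def WadmSet (U : ℝ → H →L[ℂ] H) (B : H →L[ℂ] H) (y₀ z_d : H) (T τ r : ℝ) :
    Set (ℝ → H) :=
  {u | MemLinfty u 0 T ∧ ‖stateT U B T τ u y₀ - z_d‖ ≤ r}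

/-- The optimal norm `M(τ,r)` of `(NP)^{τ,r}`. -/
def MNP (U : ℝ → H →L[ℂ] H) (B : H →L[ℂ] H) (y₀ z_d : H) (T τ r : ℝ) : ℝ :=
  sInf ((fun u : ℝ → H => supNorm u τ T) '' WadmSet U B y₀ z_d T τ r)

/-- `u` is an optimal control to `(NP)^{τ,r}`. -/
def IsOptNP (U : ℝ → H →L[ℂ] H) (B : H →L[ℂ] H) (y₀ z_d : H) (T τ r : ℝ) (u : ℝ → H) :
    Prop :=
  u ∈ WadmSet U B y₀ z_d T τ r ∧ supNorm u τ T = MNP U B y₀ z_d T τ r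

/-- The admissible set `V_{M,r}` of the second type optimal time problem `(TP)^{M,r}`. -/
def VadmSet (U : ℝ → H →L[ℂ] H) (B : H →L[ℂ] H) (y₀ z_d : H) (T M r : ℝ) :
    Set (ℝ → H) :=
  {u | ∃ τ : ℝ, τ ∈ Ico (0 : ℝ) T ∧ u ∈ UadmSet M τ T ∧
    ‖stateT U B T τ u y₀ - z_d‖ ≤ r}

/-- `τ_{M,r}(u)`. -/
def tauOf (U : ℝ → H →L[ℂ] H) (B : H →L[ℂ] H) (y₀ z_d : H) (T r : ℝ) (u : ℝ → H) : ℝ :=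
  sSup {τ : ℝ | τ ∈ Ico (0 : ℝ) T ∧ ‖stateT U B T τ u y₀ - z_d‖ ≤ r}

/-- The optimal time `τ(M,r)` of `(TP)^{M,r}`. -/
def tauTP (U : ℝ → H →L[ℂ] H) (B : H →L[ℂ] H) (y₀ z_d : H) (T M r : ℝ) : ℝ :=
  sSup (tauOf U B y₀ z_d T r '' VadmSet U B y₀ z_d T M r)

/-- `u` is an optimal control to `(TP)^{M,r}`. -/
def IsOptTP (U : ℝ → H →L[ℂ] H) (B : H →L[ℂ] H) (y₀ z_d : H) (T M r : ℝ) (u : ℝ → H) :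
    Prop :=
  u ∈ VadmSet U B y₀ z_d T M r ∧
    ‖stateT U B T (tauTP U B y₀ z_d T M r) u y₀ - z_d‖ ≤ r

/-- The adjoint state `φ*(t) = U(t-T)(z_d - y(T; χ_{(τ,T)}u, y₀))`. -/
def adjState (U : ℝ → H →L[ℂ] H) (B : H →L[ℂ] H) (y₀ z_d : H) (T τ : ℝ) (u : ℝ → H)
    (t : ℝ) : H :=
  U (t - T) (z_d - stateT U B T τ u y₀)


/-! ### Auxiliary lemmas -/

section Aux

variable {U : ℝ → H →L[ℂ] H} {B : H →L[ℂ] H}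

lemma IsUnitaryGroup.norm_eq (hU : IsUnitaryGroup U) (t : ℝ) (x : H) : ‖U t x‖ = ‖x‖ :=
  hU.2.2.1 t x

lemma IsUnitaryGroup.add_apply (hU : IsUnitaryGroup U) (s t : ℝ) (x : H) :
    U (s + t) x = U s (U t x) := by rw [hU.2.1 s t]; rfl

lemma IsUnitaryGroup.eq_zero_iff (hU : IsUnitaryGroup U) (t : ℝ) (x : H) :
    U t x = 0 ↔ x = 0 := by
  constructor
  · intro h
    have h2 := hU.norm_eq t x
    rw [h, norm_zero] at h2
    exact norm_eq_zero.mp h2.symm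
  · intro h; simp [h]

lemma IsUnitaryGroup.continuous_pair (hU : IsUnitaryGroup U) :
    Continuous fun p : ℝ × H => U p.1 p.2 := by
  rw [continuous_iff_continuousAt]
  rintro ⟨t₀, x₀⟩
  have h1 : Tendsto (fun p : ℝ × H => U p.1 (p.2 - x₀)) (𝓝 (t₀, x₀)) (𝓝 0) := by
    have hg : Tendsto (fun p : ℝ × H => ‖p.2 - x₀‖) (𝓝 (t₀, x₀)) (𝓝 0) := by
      have hc : Continuous fun p : ℝ × H => ‖p.2 - x₀‖ :=
        (continuous_snd.sub continuous_const).norm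
      simpa using hc.tendsto (t₀, x₀)
    exact squeeze_zero_norm (fun p => le_of_eq (hU.norm_eq p.1 (p.2 - x₀))) hg
  have h2 : Tendsto (fun p : ℝ × H => U p.1 x₀) (𝓝 (t₀, x₀)) (𝓝 (U t₀ x₀)) :=
    ((hU.2.2.2 x₀).comp continuous_fst).tendsto (t₀, x₀)
  have h3 := h1.add h2
  rw [zero_add] at h3
  have heq : (fun p : ℝ × H => U p.1 (p.2 - x₀) + U p.1 x₀) = fun p : ℝ × H => U p.1 p.2 := by
    funext p; rw [map_sub]; abel
  unfold ContinuousAt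
  rwa [heq] at h3

lemma aesm_integrand (hU : IsUnitaryGroup U) (B : H →L[ℂ] H) {u : ℝ → H}
    (hu : AEStronglyMeasurable u (volume : Measure ℝ)) (a : ℝ) :
    AEStronglyMeasurable (fun s : ℝ => U (a - s) (B (u s))) (volume : Measure ℝ) := by
  have h1 : AEStronglyMeasurable (fun s : ℝ => ((a - s : ℝ), B (u s))) (volume : Measure ℝ) :=
    ((continuous_const.sub continuous_id).aestronglyMeasurable).prodMk
      (B.continuous.comp_aestronglyMeasurable hu)
  exact hU.continuous_pair.comp_aestronglyMeasurable h1

lemma IsOrthProj.apply_apply (hB : IsOrthProj B) (x : H) : B (B x) = B x := by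
  exact congrArg (fun f : H →L[ℂ] H => f x) hB.2.1

lemma IsOrthProj.norm_le (hB : IsOrthProj B) (x : H) : ‖B x‖ ≤ ‖x‖ := by
  by_cases h : B x = 0
  · rw [h, norm_zero]; exact norm_nonneg x
  · have h2 : (inner ℂ (B x) (B x) : ℂ) = inner ℂ x (B x) := by
      rw [hB.2.2 x (B x), hB.apply_apply]
    have h1 : ‖(inner ℂ x (B x) : ℂ)‖ = ‖B x‖ ^ 2 := by
      rw [← h2, inner_self_eq_norm_sq_to_K]
      simp
    have h4 : ‖(inner ℂ x (B x) : ℂ)‖ ≤ ‖x‖ * ‖B x‖ := norm_inner_le_norm x (B x)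
    have h5 : ‖B x‖ * ‖B x‖ ≤ ‖x‖ * ‖B x‖ := by
      calc ‖B x‖ * ‖B x‖ = ‖B x‖ ^ 2 := (sq ‖B x‖).symm
        _ = ‖(inner ℂ x (B x) : ℂ)‖ := h1.symm
        _ ≤ ‖x‖ * ‖B x‖ := h4
    exact le_of_mul_le_mul_right h5 (norm_pos_iff.mpr h)

lemma integrableOn_integrand (hU : IsUnitaryGroup U) (hB : IsOrthProj B) {u : ℝ → H} {c a b e : ℝ}
    (hu : AEStronglyMeasurable u (volume : Measure ℝ))
    (hbd : ∀ᵐ t : ℝ ∂volume, t ∈ Ioo a b → ‖u t‖ ≤ c) :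
    IntegrableOn (fun s : ℝ => U (e - s) (B (u s))) (Ioo a b) volume := by
  apply Integrable.mono' (g := fun _ : ℝ => c)
  · exact integrableOn_const measure_Ioo_lt_top.ne
  · exact (aesm_integrand hU B hu e).restrict
  · rw [ae_restrict_iff' measurableSet_Ioo]
    filter_upwards [hbd] with t ht hmem
    rw [hU.norm_eq]
    exact le_trans (hB.norm_le _) (ht hmem)

lemma supNorm_nonneg (u : ℝ → H) (a b : ℝ) : 0 ≤ supNorm u a b :=
  Real.sInf_nonneg (fun _ hc => hc.1)

lemma supNorm_le {u : ℝ → H} {a b c : ℝ} (hc : 0 ≤ c)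
    (h : ∀ᵐ t : ℝ ∂volume, t ∈ Ioo a b → ‖u t‖ ≤ c) : supNorm u a b ≤ c :=
  csInf_le ⟨0, fun _ hx => hx.1⟩ ⟨hc, h⟩

lemma ae_comp_add {P : ℝ → Prop} (c : ℝ) (h : ∀ᵐ t : ℝ ∂volume, P t) :
    ∀ᵐ t : ℝ ∂volume, P (t + c) :=
  (measurePreserving_add_right (volume : Measure ℝ) c).quasiMeasurePreserving.ae h

lemma mp_sub_left (c : ℝ) : MeasurePreserving (fun t : ℝ => c - t) volume volume :=
  (measurePreserving_add_left (volume : Measure ℝ) c).comp (Measure.measurePreserving_neg _)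

lemma ae_comp_sub {P : ℝ → Prop} (c : ℝ) (h : ∀ᵐ t : ℝ ∂volume, P t) :
    ∀ᵐ t : ℝ ∂volume, P (c - t) :=
  (mp_sub_left c).quasiMeasurePreserving.ae h

lemma setIntegral_comp_add (f : ℝ → H) (a b c : ℝ) :
    ∫ s in Ioo a b, f s = ∫ s in Ioo (a - c) (b - c), f (s + c) := by
  have h := (measurePreserving_add_right (volume : Measure ℝ) c).setIntegral_preimage_emb
    (Homeomorph.addRight c).measurableEmbedding f (Ioo a b)
  rw [preimage_add_const_Ioo] at h
  rw [← h]

lemma setIntegral_comp_sub (f : ℝ → H) (a b c : ℝ) :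
    ∫ s in Ioo a b, f s = ∫ s in Ioo (c - b) (c - a), f (c - s) := by
  have h := (mp_sub_left c).setIntegral_preimage_emb
    (Homeomorph.subLeft c).measurableEmbedding f (Ioo a b)
  rw [preimage_const_sub_Ioo] at h
  rw [← h]


lemma integrableOn_integrand' (hU : IsUnitaryGroup U) (hB : IsOrthProj B) {f : ℝ → H}
    {c a b : ℝ} (hf : AEStronglyMeasurable f (volume : Measure ℝ))
    (hbd : ∀ᵐ t : ℝ ∂volume, t ∈ Ioo a b → ‖f t‖ ≤ c) :
    IntegrableOn (fun σ : ℝ => U σ (B (f σ))) (Ioo a b) volume := by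
  have hm : AEStronglyMeasurable (fun σ : ℝ => U σ (B (f σ))) (volume : Measure ℝ) :=
    hU.continuous_pair.comp_aestronglyMeasurable
      (aestronglyMeasurable_id.prodMk (B.continuous.comp_aestronglyMeasurable hf))
  apply Integrable.mono' (g := fun _ : ℝ => c)
  · exact integrableOn_const measure_Ioo_lt_top.ne
  · exact hm.restrict
  · rw [ae_restrict_iff' measurableSet_Ioo]
    filter_upwards [hbd] with t ht hmem
    rw [hU.norm_eq]
    exact le_trans (hB.norm_le _) (ht hmem)

lemma IsUnitaryGroup.rev (hU : IsUnitaryGroup U) : IsUnitaryGroup (fun t => U (-t)) := by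
  refine ⟨by simpa using hU.1, fun s t => ?_, fun t x => hU.2.2.1 _ x,
    fun x => (hU.2.2.2 x).comp continuous_neg⟩
  show U (-(s + t)) = (U (-s)).comp (U (-t))
  rw [show -(s + t) = -s + -t by ring]
  exact hU.2.1 (-s) (-t)

end Aux


/-! ### Minimal norm theory for steering to zero -/

section NTheory

variable {W : ℝ → H →L[ℂ] H} {B : H →L[ℂ] H} {x₀ : H}

lemma cset_nonempty {u : ℝ → H} {a b a' b' : ℝ} (hsub : Ioo a' b' ⊆ Ioo a b)
    (h : MemLinfty u a b) :
    {c : ℝ | 0 ≤ c ∧ ∀ᵐ t : ℝ ∂volume, t ∈ Ioo a' b' → ‖u t‖ ≤ c}.Nonempty := by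
  obtain ⟨-, c, hc⟩ := h
  refine ⟨max c 0, le_max_right _ _, ?_⟩
  filter_upwards [hc] with t ht htm
  exact le_trans (ht (hsub htm)) (le_max_left _ _)

lemma supNorm_eq_csInf (u : ℝ → H) (a b : ℝ) :
    supNorm u a b = sInf {c : ℝ | 0 ≤ c ∧ ∀ᵐ t : ℝ ∂volume, t ∈ Ioo a b → ‖u t‖ ≤ c} := rfl

lemma integral_of_state_zero (hW : IsUnitaryGroup W) {v : ℝ → H} {S : ℝ} {x : H}
    (hst : stateT W B S 0 v x = 0) :
    ∫ s in Ioo 0 S, W (S - s) (B (v s)) = -(W S x) := by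
  unfold stateT at hst
  exact eq_neg_of_add_eq_zero_right hst

lemma stateT_congr (hW : IsUnitaryGroup W) {u v : ℝ → H} {S τ : ℝ} {x : H}
    (h : ∀ s ∈ Ioo τ S, u s = v s) :
    stateT W B S τ u x = stateT W B S τ v x := by
  unfold stateT
  congr 1
  apply setIntegral_congr_fun measurableSet_Ioo
  intro s hs
  simp only [h s hs]

lemma stateT_extend (hW : IsUnitaryGroup W) (hB : IsOrthProj B) {u : ℝ → H} {c S₁ S₂ : ℝ}
    (h12 : S₁ ≤ S₂) (hu : AEStronglyMeasurable u (volume : Measure ℝ))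
    (hbd : ∀ᵐ t : ℝ ∂volume, t ∈ Ioo 0 S₁ → ‖u t‖ ≤ c)
    (hzero : ∀ s, s ∉ Ioo 0 S₁ → u s = 0) (x : H) :
    stateT W B S₂ 0 u x = W (S₂ - S₁) (stateT W B S₁ 0 u x) := by
  unfold stateT
  rw [map_add]
  congr 1
  · rw [← hW.add_apply, sub_add_cancel]
  · have h1 : (fun s => W (S₂ - s) (B (u s)))
        = (Ioo 0 S₁).indicator (fun s => W (S₂ - s) (B (u s))) := by
      funext s
      by_cases hs : s ∈ Ioo 0 S₁
      · rw [Set.indicator_of_mem hs]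
      · rw [Set.indicator_of_notMem hs, hzero s hs, map_zero, map_zero]
    conv_lhs => rw [h1]
    rw [setIntegral_indicator measurableSet_Ioo]
    have hint : Ioo (0:ℝ) S₂ ∩ Ioo 0 S₁ = Ioo 0 S₁ := by
      rw [Ioo_inter_Ioo, max_self, min_eq_right h12]
    rw [hint]
    have h2 : ∀ s ∈ Ioo (0:ℝ) S₁, W (S₂ - s) (B (u s)) = W (S₂ - S₁) (W (S₁ - s) (B (u s))) := by
      intro s _
      rw [← hW.add_apply]
      congr 1
      ring
    rw [setIntegral_congr_fun measurableSet_Ioo h2]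
    exact (W (S₂ - S₁)).integral_comp_comm (integrableOn_integrand hW hB hu hbd (e := S₁))

lemma VTset_nonempty (hECW : EC W B) {S : ℝ} (hS : 0 < S) (x : H) :
    (VTset W B x S).Nonempty := by
  obtain ⟨C, hC, h⟩ := hECW S hS
  obtain ⟨u, hmeas, hbd, hst⟩ := h x 0
  exact ⟨u, ⟨hmeas, ⟨C * ‖0 - W S x‖, hbd⟩⟩, hst⟩

lemma Mmin_bddBelow (S : ℝ) (x : H) :
    BddBelow ((fun v : ℝ → H => supNorm v 0 S) '' VTset W B x S) := by
  refine ⟨0, ?_⟩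
  rintro y ⟨v, -, rfl⟩
  exact supNorm_nonneg v 0 S

lemma Mmin_le {S : ℝ} {x : H} {v : ℝ → H} (hv : v ∈ VTset W B x S) :
    Mmin W B x S ≤ supNorm v 0 S :=
  csInf_le (Mmin_bddBelow S x) ⟨v, hv, rfl⟩

lemma div_le_of_mem_VTset (hW : IsUnitaryGroup W) (hB : IsOrthProj B) {S : ℝ} (hS : 0 < S)
    {x : H} {v : ℝ → H} (hv : v ∈ VTset W B x S) {c : ℝ} (hc0 : 0 ≤ c)
    (hc : ∀ᵐ t : ℝ ∂volume, t ∈ Ioo 0 S → ‖v t‖ ≤ c) :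
    ‖x‖ / S ≤ c := by
  have h1 : ∫ s in Ioo 0 S, W (S - s) (B (v s)) = -(W S x) := integral_of_state_zero hW hv.2
  have h2 : ‖∫ s in Ioo 0 S, W (S - s) (B (v s))‖ ≤ c * (volume (Ioo (0:ℝ) S)).toReal := by
    apply norm_setIntegral_le_of_norm_le_const_ae' measure_Ioo_lt_top
    filter_upwards [hc] with t ht htm
    rw [hW.norm_eq]
    exact le_trans (hB.norm_le _) (ht htm)
  rw [h1, norm_neg, hW.norm_eq] at h2
  rw [Real.volume_Ioo, sub_zero, ENNReal.toReal_ofReal hS.le] at h2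
  rw [div_le_iff₀ hS]
  exact h2

lemma div_le_Mmin (hW : IsUnitaryGroup W) (hB : IsOrthProj B) (hECW : EC W B) {S : ℝ}
    (hS : 0 < S) (x : H) : ‖x‖ / S ≤ Mmin W B x S := by
  apply le_csInf ((VTset_nonempty hECW hS x).image _)
  rintro y ⟨v, hv, rfl⟩
  apply le_csInf (cset_nonempty (subset_refl _) hv.1)
  rintro c ⟨hc0, hc⟩
  exact div_le_of_mem_VTset hW hB hS hv hc0 hc

lemma Mmin_pos (hW : IsUnitaryGroup W) (hB : IsOrthProj B) (hECW : EC W B) {S : ℝ}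
    (hS : 0 < S) {x : H} (hx : x ≠ 0) : 0 < Mmin W B x S :=
  lt_of_lt_of_le (div_pos (norm_pos_iff.mpr hx) hS) (div_le_Mmin hW hB hECW hS x)

lemma indicator_mem_VTset (hW : IsUnitaryGroup W) (hB : IsOrthProj B) {S₁ S₂ : ℝ}
    (h12 : S₁ ≤ S₂) {x : H} {v : ℝ → H} (hv : v ∈ VTset W B x S₁) {c : ℝ} (hc0 : 0 ≤ c)
    (hc : ∀ᵐ t : ℝ ∂volume, t ∈ Ioo 0 S₁ → ‖v t‖ ≤ c) :
    (Ioo (0:ℝ) S₁).indicator v ∈ VTset W B x S₂ ∧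
      (∀ᵐ t : ℝ ∂volume, t ∈ Ioo 0 S₂ → ‖(Ioo (0:ℝ) S₁).indicator v t‖ ≤ c) := by
  set vb := (Ioo (0:ℝ) S₁).indicator v with hvb
  have hmeas : AEStronglyMeasurable vb (volume : Measure ℝ) :=
    hv.1.1.indicator measurableSet_Ioo
  have hbd' : ∀ᵐ t : ℝ ∂volume, t ∈ Ioo 0 S₁ → ‖vb t‖ ≤ c := by
    filter_upwards [hc] with t ht htm
    rw [hvb, Set.indicator_of_mem htm]
    exact ht htm
  have hbd2 : ∀ᵐ t : ℝ ∂volume, t ∈ Ioo 0 S₂ → ‖vb t‖ ≤ c := by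
    filter_upwards [hbd'] with t ht htm
    by_cases hmem : t ∈ Ioo (0:ℝ) S₁
    · exact ht hmem
    · rw [hvb, Set.indicator_of_notMem hmem, norm_zero]; exact hc0
  have hstate1 : stateT W B S₁ 0 vb x = 0 := by
    rw [stateT_congr hW (fun s hs => Set.indicator_of_mem hs v)]
    exact hv.2
  have hstate : stateT W B S₂ 0 vb x = 0 := by
    rw [stateT_extend hW hB h12 hmeas hbd' (fun s hs => Set.indicator_of_notMem hs v) x,
      hstate1, map_zero]
  exact ⟨⟨⟨hmeas, ⟨c, hbd2⟩⟩, hstate⟩, hbd2⟩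

lemma Mmin_antitone (hW : IsUnitaryGroup W) (hB : IsOrthProj B) (hECW : EC W B)
    {S₁ S₂ : ℝ} (h0 : 0 < S₁) (h12 : S₁ ≤ S₂) (x : H) :
    Mmin W B x S₂ ≤ Mmin W B x S₁ := by
  apply le_csInf ((VTset_nonempty hECW h0 x).image _)
  rintro y ⟨v, hv, rfl⟩
  apply le_csInf (cset_nonempty (subset_refl _) hv.1)
  rintro c ⟨hc0, hc⟩
  obtain ⟨hmem, hbd⟩ := indicator_mem_VTset hW hB h12 hv hc0 hc
  exact le_trans (Mmin_le hmem) (supNorm_le hc0 hbd)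


lemma integral_shift (W : ℝ → H →L[ℂ] H) (B : H →L[ℂ] H) (w : ℝ → H) (S₁ S₂ : ℝ) :
    ∫ s in Ioo S₁ S₂, W (S₂ - s) (B (w (s - S₁)))
      = ∫ σ in Ioo 0 (S₂ - S₁), W ((S₂ - S₁) - σ) (B (w σ)) := by
  rw [setIntegral_comp_add (fun s => W (S₂ - s) (B (w (s - S₁)))) S₁ S₂ S₁, sub_self]
  apply setIntegral_congr_fun measurableSet_Ioo
  intro σ _
  have e1 : S₂ - (σ + S₁) = S₂ - S₁ - σ := by ring
  have e2 : σ + S₁ - S₁ = σ := by ring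
  simp only [e1, e2]

lemma norm_real_smul (r : ℝ) (z : H) (hr : 0 ≤ r) : ‖((r : ℝ) : ℂ) • z‖ = r * ‖z‖ := by
  rw [norm_smul]; simp [abs_of_nonneg hr]

lemma Mmin_strictAnti (hW : IsUnitaryGroup W) (hB : IsOrthProj B) (hECW : EC W B)
    {S₁ S₂ : ℝ} (h0 : 0 < S₁) (h12 : S₁ < S₂) (hx : x₀ ≠ 0) :
    Mmin W B x₀ S₂ < Mmin W B x₀ S₁ := by
  set m := Mmin W B x₀ S₁ with hm_def
  have hm : 0 < m := Mmin_pos hW hB hECW h0 hx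
  obtain ⟨C, hC, hEC2⟩ := hECW (S₂ - S₁) (by linarith)
  set K := C * ‖x₀‖ with hK_def
  have hK : 0 < K := mul_pos hC (norm_pos_iff.mpr hx)
  set lam := m / (K + m) with hlam_def
  have hKm : 0 < K + m := by linarith
  have hlam0 : 0 < lam := div_pos hm hKm
  have hlam1 : lam < 1 := (div_lt_one hKm).mpr (by linarith)
  have hkey : lam * K = (1 - lam) * m := by
    rw [hlam_def]; field_simp; ring
  have main : ∀ v ∈ VTset W B x₀ S₁, ∀ c : ℝ, 0 ≤ c →
      (∀ᵐ t : ℝ ∂volume, t ∈ Ioo 0 S₁ → ‖v t‖ ≤ c) →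
      Mmin W B x₀ S₂ ≤ (1 - lam) * c := by
    intro v hv c hc0 hc
    have hcm : m ≤ c :=
      le_trans (Mmin_le hv) (csInf_le ⟨0, fun x hx => hx.1⟩ ⟨hc0, hc⟩)
    set y₁ : H := ((lam : ℝ) : ℂ) • (W S₁ x₀) with hy₁_def
    obtain ⟨w, hwm, hwb, hwst⟩ := hEC2 y₁ 0
    have hny : ‖(0 : H) - W (S₂ - S₁) y₁‖ = lam * ‖x₀‖ := by
      rw [zero_sub, norm_neg, hW.norm_eq, hy₁_def, norm_real_smul _ _ hlam0.le, hW.norm_eq]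
    have hwb' : ∀ᵐ t : ℝ ∂volume, t ∈ Ioo 0 (S₂ - S₁) → ‖w t‖ ≤ lam * K := by
      filter_upwards [hwb] with t ht htm
      calc ‖w t‖ ≤ C * ‖(0:H) - W (S₂ - S₁) y₁‖ := ht htm
        _ = lam * K := by rw [hny, hK_def]; ring
    set v1 : ℝ → H := (Ioo (0:ℝ) S₁).indicator (fun s => ((1 - lam : ℝ) : ℂ) • v s) with hv1_def
    set v2 : ℝ → H := (Ioo S₁ S₂).indicator (fun s => w (s - S₁)) with hv2_def
    have hv1m : AEStronglyMeasurable v1 (volume : Measure ℝ) :=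
      (hv.1.1.const_smul _).indicator measurableSet_Ioo
    have hw2m : AEStronglyMeasurable (fun s : ℝ => w (s - S₁)) (volume : Measure ℝ) := by
      have h1 : AEStronglyMeasurable (fun s : ℝ => w (s + -S₁)) (volume : Measure ℝ) :=
        hwm.comp_quasiMeasurePreserving
          ((measurePreserving_add_right (volume : Measure ℝ) (-S₁)).quasiMeasurePreserving)
      simpa [sub_eq_add_neg] using h1
    have hv2m : AEStronglyMeasurable v2 (volume : Measure ℝ) :=
      hw2m.indicator measurableSet_Ioo
    set g : ℝ → H := fun s => v1 s + v2 s with hg_def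
    have hgm : AEStronglyMeasurable g (volume : Measure ℝ) := hv1m.add hv2m
    have hwb2 : ∀ᵐ t : ℝ ∂volume, t ∈ Ioo S₁ S₂ → ‖w (t - S₁)‖ ≤ lam * K := by
      have h1 := ae_comp_add (-S₁) hwb'
      filter_upwards [h1] with t ht htm
      have h2 : t + -S₁ ∈ Ioo (0:ℝ) (S₂ - S₁) := by
        obtain ⟨ha, hb⟩ := htm
        exact ⟨by linarith, by linarith⟩
      have h3 := ht h2
      rw [sub_eq_add_neg]
      exact h3
    have hv1b : ∀ᵐ t : ℝ ∂volume, t ∈ Ioo 0 S₂ → ‖v1 t‖ ≤ (1 - lam) * c := by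
      filter_upwards [hc] with t ht htm
      by_cases hmem : t ∈ Ioo (0:ℝ) S₁
      · rw [hv1_def, Set.indicator_of_mem hmem, norm_real_smul _ _ (by linarith)]
        exact mul_le_mul_of_nonneg_left (ht hmem) (by linarith)
      · rw [hv1_def, Set.indicator_of_notMem hmem, norm_zero]
        exact mul_nonneg (by linarith) hc0
    have hv2b : ∀ᵐ t : ℝ ∂volume, t ∈ Ioo 0 S₂ → ‖v2 t‖ ≤ lam * K := by
      filter_upwards [hwb2] with t ht htm
      by_cases hmem : t ∈ Ioo S₁ S₂
      · rw [hv2_def, Set.indicator_of_mem hmem]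
        exact ht hmem
      · rw [hv2_def, Set.indicator_of_notMem hmem, norm_zero]
        exact mul_nonneg hlam0.le hK.le
    have hgb : ∀ᵐ t : ℝ ∂volume, t ∈ Ioo 0 S₂ → ‖g t‖ ≤ (1 - lam) * c := by
      filter_upwards [hv1b, hv2b] with t h1 h2 htm
      by_cases ht1 : t ∈ Ioo (0:ℝ) S₁
      · have ht2 : t ∉ Ioo S₁ S₂ := fun hcon => absurd hcon.1 (not_lt.mpr ht1.2.le)
        rw [hg_def]
        simp only []
        rw [hv2_def, Set.indicator_of_notMem ht2, add_zero]
        exact h1 htm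
      · by_cases ht2 : t ∈ Ioo S₁ S₂
        · rw [hg_def]
          simp only []
          rw [hv1_def, Set.indicator_of_notMem ht1, zero_add]
          calc ‖v2 t‖ ≤ lam * K := h2 htm
            _ = (1 - lam) * m := hkey
            _ ≤ (1 - lam) * c := mul_le_mul_of_nonneg_left hcm (by linarith)
        · rw [hg_def]
          simp only []
          rw [hv1_def, hv2_def, Set.indicator_of_notMem ht1, Set.indicator_of_notMem ht2,
            add_zero, norm_zero]
          exact mul_nonneg (by linarith) hc0
    -- compute the state
    have hint1 : IntegrableOn (fun s => W (S₂ - s) (B (v1 s))) (Ioo 0 S₂) volume :=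
      integrableOn_integrand hW hB hv1m hv1b
    have hint2 : IntegrableOn (fun s => W (S₂ - s) (B (v2 s))) (Ioo 0 S₂) volume :=
      integrableOn_integrand hW hB hv2m hv2b
    have hsplit : ∫ s in Ioo 0 S₂, W (S₂ - s) (B (g s))
        = (∫ s in Ioo 0 S₂, W (S₂ - s) (B (v1 s))) + ∫ s in Ioo 0 S₂, W (S₂ - s) (B (v2 s)) := by
      rw [← integral_add hint1 hint2]
      apply setIntegral_congr_fun measurableSet_Ioo
      intro s _
      simp only [hg_def, map_add]
    have hst1 : ∫ s in Ioo 0 S₁, W (S₁ - s) (B (v s)) = -(W S₁ x₀) :=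
      integral_of_state_zero hW hv.2
    have hstw : ∫ σ in Ioo 0 (S₂ - S₁), W ((S₂ - S₁) - σ) (B (w σ)) = -(W (S₂ - S₁) y₁) :=
      integral_of_state_zero hW hwst
    have hWy₁ : W (S₂ - S₁) y₁ = ((lam : ℝ) : ℂ) • W S₂ x₀ := by
      rw [hy₁_def, _root_.map_smul, ← hW.add_apply, sub_add_cancel]
    have hI1 : ∫ s in Ioo 0 S₂, W (S₂ - s) (B (v1 s))
        = -(((1 - lam : ℝ) : ℂ) • W S₂ x₀) := by
      have heq : (fun s => W (S₂ - s) (B (v1 s)))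
          = (Ioo (0:ℝ) S₁).indicator (fun s => W (S₂ - s) (B (((1 - lam : ℝ) : ℂ) • v s))) := by
        funext s
        by_cases hmem : s ∈ Ioo (0:ℝ) S₁
        · rw [Set.indicator_of_mem hmem, hv1_def, Set.indicator_of_mem hmem]
        · rw [Set.indicator_of_notMem hmem, hv1_def, Set.indicator_of_notMem hmem,
            map_zero, map_zero]
      rw [heq, setIntegral_indicator measurableSet_Ioo]
      have hinter : Ioo (0:ℝ) S₂ ∩ Ioo 0 S₁ = Ioo 0 S₁ := by
        rw [Ioo_inter_Ioo, max_self, min_eq_right h12.le]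
      rw [hinter]
      have hpt : ∀ s ∈ Ioo (0:ℝ) S₁, W (S₂ - s) (B (((1 - lam : ℝ) : ℂ) • v s))
          = ((1 - lam : ℝ) : ℂ) • W (S₂ - S₁) (W (S₁ - s) (B (v s))) := by
        intro s _
        rw [_root_.map_smul, _root_.map_smul]
        have he : S₂ - s = (S₂ - S₁) + (S₁ - s) := by ring
        rw [he, hW.add_apply]
      rw [setIntegral_congr_fun measurableSet_Ioo hpt, integral_smul,
        (W (S₂ - S₁)).integral_comp_comm (integrableOn_integrand hW hB hv.1.1 hc (e := S₁)),
        hst1, map_neg, smul_neg, ← hW.add_apply, sub_add_cancel]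
    have hI2 : ∫ s in Ioo 0 S₂, W (S₂ - s) (B (v2 s)) = -(((lam : ℝ) : ℂ) • W S₂ x₀) := by
      have heq : (fun s => W (S₂ - s) (B (v2 s)))
          = (Ioo S₁ S₂).indicator (fun s => W (S₂ - s) (B (w (s - S₁)))) := by
        funext s
        by_cases hmem : s ∈ Ioo S₁ S₂
        · rw [Set.indicator_of_mem hmem, hv2_def, Set.indicator_of_mem hmem]
        · rw [Set.indicator_of_notMem hmem, hv2_def, Set.indicator_of_notMem hmem,
            map_zero, map_zero]
      rw [heq, setIntegral_indicator measurableSet_Ioo]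
      have hinter : Ioo (0:ℝ) S₂ ∩ Ioo S₁ S₂ = Ioo S₁ S₂ := by
        rw [Ioo_inter_Ioo, min_self, max_eq_right h0.le]
      rw [hinter, integral_shift W B w S₁ S₂, hstw, hWy₁]
    have hstate : stateT W B S₂ 0 g x₀ = 0 := by
      unfold stateT
      rw [hsplit, hI1, hI2]
      have hcoef : ((1 - lam : ℝ) : ℂ) + ((lam : ℝ) : ℂ) = 1 := by push_cast; ring
      rw [← neg_add, ← add_smul, hcoef, one_smul, add_neg_cancel]
    have hgmem : g ∈ VTset W B x₀ S₂ := ⟨⟨hgm, ⟨(1 - lam) * c, hgb⟩⟩, hstate⟩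
    exact le_trans (Mmin_le hgmem) (supNorm_le (mul_nonneg (by linarith) hc0) hgb)
  have step2 : Mmin W B x₀ S₂ ≤ (1 - lam) * m := by
    have h1 : Mmin W B x₀ S₂ / (1 - lam) ≤ m := by
      apply le_csInf ((VTset_nonempty hECW h0 x₀).image _)
      rintro y ⟨v, hv, rfl⟩
      have h2 : Mmin W B x₀ S₂ / (1 - lam) ≤ supNorm v 0 S₁ := by
        apply le_csInf (cset_nonempty (subset_refl _) hv.1)
        rintro c ⟨hc0, hc⟩
        rw [div_le_iff₀ (by linarith)]
        calc Mmin W B x₀ S₂ ≤ (1 - lam) * c := main v hv c hc0 hc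
          _ = c * (1 - lam) := mul_comm _ _
      exact h2
    calc Mmin W B x₀ S₂ = Mmin W B x₀ S₂ / (1 - lam) * (1 - lam) := by
          rw [div_mul_cancel₀]
          intro hzero
          rw [sub_eq_zero] at hzero
          exact absurd hzero.symm (ne_of_lt hlam1)
      _ ≤ m * (1 - lam) := mul_le_mul_of_nonneg_right h1 (by linarith)
      _ = (1 - lam) * m := mul_comm _ _
  calc Mmin W B x₀ S₂ ≤ (1 - lam) * m := step2
    _ < m := by nlinarith

lemma Tmin_pos (hW : IsUnitaryGroup W) (hx : x₀ ≠ 0) (hETW : ET W B) {M : ℝ} (hM : 0 < M) :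
    0 < Tmin W B x₀ M := by
  obtain ⟨u, hu, hst⟩ := hETW x₀ hx M hM
  by_contra hneg
  push_neg at hneg
  have hempty : Ioo (0:ℝ) (Tmin W B x₀ M) = ∅ := Ioo_eq_empty (by simpa using hneg)
  unfold stateT at hst
  rw [hempty] at hst
  simp only [Measure.restrict_empty, integral_zero_measure, add_zero] at hst
  exact hx ((hW.eq_zero_iff _ _).mp hst)

lemma Mmin_Tmin (hW : IsUnitaryGroup W) (hB : IsOrthProj B) (hx : x₀ ≠ 0) (hECW : EC W B)
    (hBBW : BB W B) (hETW : ET W B) {M : ℝ} (hM : 0 < M) :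
    Mmin W B x₀ (Tmin W B x₀ M) = M := by
  set τ' := Tmin W B x₀ M with hτ'_def
  have hτ : 0 < τ' := Tmin_pos hW hx hETW hM
  obtain ⟨u, hu, hst⟩ := hETW x₀ hx M hM
  have hle : Mmin W B x₀ τ' ≤ M := by
    have humem : u ∈ VTset W B x₀ τ' := by
      refine ⟨⟨hu.1.1, ?_⟩, hst⟩
      obtain ⟨c, hc⟩ := hu.1.2
      exact ⟨c, by filter_upwards [hc] with t ht htm; exact ht htm.1⟩
    have hsn : supNorm u 0 τ' ≤ M := by
      apply supNorm_le hM.le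
      filter_upwards [hu.2.1] with t ht htm
      exact ht htm.1
    exact le_trans (Mmin_le humem) hsn
  rcases lt_or_eq_of_le hle with hlt | heq
  · exfalso
    obtain ⟨y, ⟨v, hv, rfl⟩, hylt⟩ :=
      exists_lt_of_csInf_lt ((VTset_nonempty hECW hτ x₀).image _) hlt
    obtain ⟨c, ⟨hc0, hc⟩, hcM⟩ :=
      exists_lt_of_csInf_lt (cset_nonempty (subset_refl _) hv.1) hylt
    set vb := (Ioo (0:ℝ) τ').indicator v with hvb_def
    have hvbm : AEStronglyMeasurable vb (volume : Measure ℝ) :=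
      hv.1.1.indicator measurableSet_Ioo
    have hvbd : ∀ᵐ t : ℝ ∂volume, t ∈ Ioi (0:ℝ) → ‖vb t‖ ≤ c := by
      filter_upwards [hc] with t ht _
      by_cases hmem : t ∈ Ioo (0:ℝ) τ'
      · rw [hvb_def, Set.indicator_of_mem hmem]; exact ht hmem
      · rw [hvb_def, Set.indicator_of_notMem hmem, norm_zero]; exact hc0
    have hvst : stateT W B τ' 0 vb x₀ = 0 := by
      rw [stateT_congr hW (fun s hs => Set.indicator_of_mem hs v)]
      exact hv.2
    have hvmem : vb ∈ UMset W B x₀ M := by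
      refine ⟨⟨hvbm, ⟨c, hvbd⟩⟩, ?_, ⟨τ', hτ, hvst⟩⟩
      filter_upwards [hvbd] with t ht htm
      exact le_trans (ht htm) hcM.le
    have hbb := hBBW x₀ hx M hM vb hvmem hvst
    have hcb : ∀ᵐ t : ℝ ∂volume, t ∈ Ioo 0 τ' → ‖vb t‖ ≤ c := by
      filter_upwards [hvbd] with t ht htm
      exact ht htm.1
    have h3 : ∀ᵐ t : ℝ ∂volume, t ∉ Ioo (0:ℝ) τ' := by
      filter_upwards [hbb, hcb] with t ht1 ht2
      intro hm
      exact absurd (ht1 hm ▸ ht2 hm) (not_le.mpr hcM)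
    have h4 : volume (Ioo (0:ℝ) τ') = 0 := measure_eq_zero_iff_ae_notMem.mpr h3
    rw [Real.volume_Ioo] at h4
    simp only [sub_zero] at h4
    rw [ENNReal.ofReal_eq_zero] at h4
    linarith
  · exact heq

lemma Mmin_continuousAt (hW : IsUnitaryGroup W) (hB : IsOrthProj B) (hx : x₀ ≠ 0)
    (hECW : EC W B) (hBBW : BB W B) (hETW : ET W B) {S₀ : ℝ} (hS₀ : 0 < S₀) :
    ContinuousAt (fun S => Mmin W B x₀ S) S₀ := by
  set m₀ := Mmin W B x₀ S₀ with hm₀_def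
  have hm₀ : 0 < m₀ := Mmin_pos hW hB hECW hS₀ hx
  rw [Metric.continuousAt_iff]
  intro ε hε
  set ε' := min (ε / 2) (m₀ / 2) with hε'_def
  have hε'0 : 0 < ε' := lt_min (by linarith) (by linarith)
  have hε'm : ε' < m₀ := lt_of_le_of_lt (min_le_right _ _) (by linarith)
  have hε'ε : ε' < ε := lt_of_le_of_lt (min_le_left _ _) (by linarith)
  set Sa := Tmin W B x₀ (m₀ + ε') with hSa_def
  set Sb := Tmin W B x₀ (m₀ - ε') with hSb_def
  have hSa0 : 0 < Sa := Tmin_pos hW hx hETW (by linarith)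
  have hSb0 : 0 < Sb := Tmin_pos hW hx hETW (by linarith)
  have hNa : Mmin W B x₀ Sa = m₀ + ε' := Mmin_Tmin hW hB hx hECW hBBW hETW (by linarith)
  have hNb : Mmin W B x₀ Sb = m₀ - ε' := Mmin_Tmin hW hB hx hECW hBBW hETW (by linarith)
  have hSa_lt : Sa < S₀ := by
    by_contra hcon
    push_neg at hcon
    have := Mmin_antitone hW hB hECW hS₀ hcon x₀
    rw [hNa] at this
    linarith
  have hSb_gt : S₀ < Sb := by
    by_contra hcon
    push_neg at hcon
    have := Mmin_antitone hW hB hECW hSb0 hcon x₀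
    rw [hNb] at this
    linarith
  refine ⟨min (S₀ - Sa) (Sb - S₀), lt_min (by linarith) (by linarith), ?_⟩
  intro S hS
  rw [Real.dist_eq] at hS
  have hS1 : Sa < S := by
    have := abs_lt.mp hS
    have h2 := min_le_left (S₀ - Sa) (Sb - S₀)
    linarith [this.1]
  have hS2 : S < Sb := by
    have := abs_lt.mp hS
    have h2 := min_le_right (S₀ - Sa) (Sb - S₀)
    linarith [this.2]
  have hub : Mmin W B x₀ S ≤ m₀ + ε' := by
    rw [← hNa]; exact Mmin_antitone hW hB hECW hSa0 hS1.le x₀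
  have hlb : m₀ - ε' ≤ Mmin W B x₀ S := by
    rw [← hNb]; exact Mmin_antitone hW hB hECW (lt_trans hSa0 hS1) hS2.le x₀
  rw [Real.dist_eq, abs_lt]
  constructor <;> simp only [hm₀_def] at * <;> linarith

end NTheory


/-! ### Correspondence between `Mtau` and the reversed minimal norm problem -/

section Corr

variable {U : ℝ → H →L[ℂ] H} {B : H →L[ℂ] H}

lemma Mtau_eq_Mmin (hU : IsUnitaryGroup U) (hB : IsOrthProj B)
    (hECrev : EC (fun t => U (-t)) B) {T τ : ℝ} (hτ0 : 0 ≤ τ) (hτT : τ < T)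
    (y₀ z_d : H) :
    Mtau U B y₀ z_d T τ = Mmin (fun t => U (-t)) B (U T y₀ - z_d) (T - τ) := by
  have hV : IsUnitaryGroup (fun t => U (-t)) := hU.rev
  set S := T - τ with hS_def
  have hS : 0 < S := by rw [hS_def]; linarith
  set x₀ := U T y₀ - z_d with hx₀_def
  -- construction (i): from a forward control to a reversed control
  have hconstr1 : ∀ u : ℝ → H, MemLinfty u 0 T → stateT U B T τ u y₀ = z_d →
      ∀ c : ℝ, 0 ≤ c → (∀ᵐ t : ℝ ∂volume, t ∈ Ioo τ T → ‖u t‖ ≤ c) →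
      ∃ v, v ∈ VTset (fun t => U (-t)) B x₀ S ∧ supNorm v 0 S ≤ c := by
    intro u hu hstate c hc0 hc
    have hum : AEStronglyMeasurable (fun σ : ℝ => u (T - σ)) (volume : Measure ℝ) :=
      hu.1.comp_quasiMeasurePreserving (mp_sub_left T).quasiMeasurePreserving
    have hb' : ∀ᵐ σ : ℝ ∂volume, σ ∈ Ioo 0 S → ‖u (T - σ)‖ ≤ c := by
      filter_upwards [ae_comp_sub T hc] with σ hσ hmem
      apply hσ
      obtain ⟨h1, h2⟩ := hmem
      rw [hS_def] at h2
      exact ⟨by linarith, by linarith⟩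
    set v := (Ioo (0:ℝ) S).indicator (fun σ => u (T - σ)) with hv_def
    have hvm : AEStronglyMeasurable v (volume : Measure ℝ) := hum.indicator measurableSet_Ioo
    have hvb : ∀ᵐ σ : ℝ ∂volume, σ ∈ Ioo 0 S → ‖v σ‖ ≤ c := by
      filter_upwards [hb'] with σ hσ hmem
      rw [hv_def, Set.indicator_of_mem hmem]
      exact hσ hmem
    have hint : IntegrableOn (fun σ : ℝ => U σ (B (u (T - σ)))) (Ioo 0 S) volume :=
      integrableOn_integrand' hU hB hum hb'
    have hrefl : ∫ σ in Ioo 0 S, U σ (B (u (T - σ))) = z_d - U T y₀ := by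
      have h1 := setIntegral_comp_sub (fun s => U (T - s) (B (u s))) τ T T
      rw [sub_self] at h1
      have h2 : ∀ σ ∈ Ioo (0:ℝ) (T - τ),
          U (T - (T - σ)) (B (u (T - σ))) = U σ (B (u (T - σ))) := by
        intro σ _; rw [sub_sub_cancel]
      rw [setIntegral_congr_fun measurableSet_Ioo h2] at h1
      rw [← hS_def] at h1
      have h3 : ∫ s in Ioo τ T, U (T - s) (B (u s)) = z_d - U T y₀ := by
        have h4 := hstate
        unfold stateT at h4
        exact eq_sub_of_add_eq' h4
      rw [← h1]
      exact h3
    have hvstate : stateT (fun t => U (-t)) B S 0 v x₀ = 0 := by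
      show U (-S) x₀ + ∫ σ in Ioo 0 S, U (-(S - σ)) (B (v σ)) = 0
      have h2 : ∀ σ ∈ Ioo (0:ℝ) S,
          U (-(S - σ)) (B (v σ)) = U (τ - T) (U σ (B (u (T - σ)))) := by
        intro σ hσ
        rw [hv_def, Set.indicator_of_mem hσ]
        have he : -(S - σ) = (τ - T) + σ := by rw [hS_def]; ring
        rw [he, hU.add_apply]
      rw [setIntegral_congr_fun measurableSet_Ioo h2,
        (U (τ - T)).integral_comp_comm hint, hrefl]
      have he2 : -S = τ - T := by rw [hS_def]; ring
      rw [he2, ← map_add]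
      have h5 : x₀ + (z_d - U T y₀) = 0 := by rw [hx₀_def]; abel
      rw [h5, map_zero]
    exact ⟨v, ⟨⟨hvm, ⟨c, hvb⟩⟩, hvstate⟩, supNorm_le hc0 hvb⟩
  -- construction (ii): from a reversed control to a forward control
  have hconstr2 : ∀ v ∈ VTset (fun t => U (-t)) B x₀ S, ∀ c : ℝ, 0 ≤ c →
      (∀ᵐ t : ℝ ∂volume, t ∈ Ioo 0 S → ‖v t‖ ≤ c) →
      ∃ u, (MemLinfty u 0 T ∧ stateT U B T τ u y₀ = z_d) ∧ supNorm u τ T ≤ c := by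
    intro v hv c hc0 hc
    have hvm' : AEStronglyMeasurable (fun s : ℝ => v (T - s)) (volume : Measure ℝ) :=
      hv.1.1.comp_quasiMeasurePreserving (mp_sub_left T).quasiMeasurePreserving
    have hb' : ∀ᵐ s : ℝ ∂volume, s ∈ Ioo τ T → ‖v (T - s)‖ ≤ c := by
      filter_upwards [ae_comp_sub T hc] with s hs hmem
      apply hs
      obtain ⟨h1, h2⟩ := hmem
      refine ⟨by linarith, ?_⟩
      rw [hS_def]; linarith
    set u := (Ioo τ T).indicator (fun s => v (T - s)) with hu_def
    have hum : AEStronglyMeasurable u (volume : Measure ℝ) := hvm'.indicator measurableSet_Ioo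
    have hub : ∀ᵐ s : ℝ ∂volume, s ∈ Ioo τ T → ‖u s‖ ≤ c := by
      filter_upwards [hb'] with s hs hmem
      rw [hu_def, Set.indicator_of_mem hmem]
      exact hs hmem
    have hub0T : ∀ᵐ s : ℝ ∂volume, s ∈ Ioo 0 T → ‖u s‖ ≤ c := by
      filter_upwards [hub] with s hs _
      by_cases hmem : s ∈ Ioo τ T
      · exact hs hmem
      · rw [hu_def, Set.indicator_of_notMem hmem, norm_zero]; exact hc0
    have hint : IntegrableOn (fun σ : ℝ => U σ (B (v σ))) (Ioo 0 S) volume :=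
      integrableOn_integrand' hU hB hv.1.1 hc
    have hJ : ∫ σ in Ioo 0 S, U σ (B (v σ)) = z_d - U T y₀ := by
      have h0' : U (-S) x₀ + ∫ σ in Ioo 0 S, U (-(S - σ)) (B (v σ)) = 0 := hv.2
      have h2 : ∀ σ ∈ Ioo (0:ℝ) S,
          U (-(S - σ)) (B (v σ)) = U (-S) (U σ (B (v σ))) := by
        intro σ _
        have he : -(S - σ) = -S + σ := by ring
        rw [he, hU.add_apply]
      rw [setIntegral_congr_fun measurableSet_Ioo h2,
        (U (-S)).integral_comp_comm hint, ← map_add] at h0'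
      have h3 : x₀ + ∫ σ in Ioo 0 S, U σ (B (v σ)) = 0 := (hU.eq_zero_iff _ _).mp h0'
      have h4 := eq_neg_of_add_eq_zero_right h3
      rw [h4, hx₀_def, neg_sub]
    have hustate : stateT U B T τ u y₀ = z_d := by
      unfold stateT
      have h2 : ∀ s ∈ Ioo τ T, U (T - s) (B (u s)) = U (T - s) (B (v (T - s))) := by
        intro s hs; rw [hu_def, Set.indicator_of_mem hs]
      rw [setIntegral_congr_fun measurableSet_Ioo h2]
      have h1 := setIntegral_comp_sub (fun s => U (T - s) (B (v (T - s)))) τ T T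
      rw [sub_self] at h1
      have h3 : ∀ σ ∈ Ioo (0:ℝ) (T - τ),
          U (T - (T - σ)) (B (v (T - (T - σ)))) = U σ (B (v σ)) := by
        intro σ _; rw [sub_sub_cancel]
      rw [setIntegral_congr_fun measurableSet_Ioo h3] at h1
      rw [← hS_def] at h1
      rw [h1, hJ]
      abel
    exact ⟨u, ⟨⟨hum, ⟨c, hub0T⟩⟩, hustate⟩, supNorm_le hc0 hub⟩
  -- conclusion
  have hne_rev := VTset_nonempty hECrev hS x₀
  apply le_antisymm
  · apply le_csInf (hne_rev.image _)
    rintro y ⟨v, hv, rfl⟩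
    apply le_csInf (cset_nonempty (subset_refl _) hv.1)
    rintro c ⟨hc0, hc⟩
    obtain ⟨u, humem, husup⟩ := hconstr2 v hv c hc0 hc
    have hbdd : BddBelow ((fun u : ℝ → H => supNorm u τ T) ''
        {u : ℝ → H | MemLinfty u 0 T ∧ stateT U B T τ u y₀ = z_d}) := by
      refine ⟨0, ?_⟩
      rintro y ⟨w, -, rfl⟩
      exact supNorm_nonneg w τ T
    have h1 : Mtau U B y₀ z_d T τ ≤ supNorm u τ T := csInf_le hbdd ⟨u, humem, rfl⟩
    exact le_trans h1 husup
  · have hne_fwd : {u : ℝ → H | MemLinfty u 0 T ∧ stateT U B T τ u y₀ = z_d}.Nonempty := by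
      obtain ⟨v₀, hv₀⟩ := hne_rev
      obtain ⟨c₀, hc₀0, hc₀⟩ := cset_nonempty (subset_refl _) hv₀.1
      obtain ⟨u₀, hu₀mem, -⟩ := hconstr2 v₀ hv₀ c₀ hc₀0 hc₀
      exact ⟨u₀, hu₀mem⟩
    apply le_csInf (hne_fwd.image _)
    rintro y ⟨u, hu, rfl⟩
    apply le_csInf (cset_nonempty (Ioo_subset_Ioo hτ0 (le_refl T)) hu.1)
    rintro c ⟨hc0, hc⟩
    obtain ⟨v, hvmem, hvsup⟩ := hconstr1 u hu.1 hu.2 c hc0 hc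
    exact le_trans (Mmin_le hvmem) hvsup

end Corr

theorem Mtau_map_properties
    (U : ℝ → H →L[ℂ] H) (B : H →L[ℂ] H) (hU : IsUnitaryGroup U) (hB : IsOrthProj B)
    (hEC : EC U B) (hECrev : EC (fun t => U (-t)) B)
    (hBB : BB U B) (hBBrev : BB (fun t => U (-t)) B)
    (hET : ET U B) (hETrev : ET (fun t => U (-t)) B)
    (T : ℝ) (hT : 0 < T) (y₀ z_d : H) (hrT : 0 < ‖U T y₀ - z_d‖) :
    StrictMonoOn (Mtau U B y₀ z_d T) (Ico (0 : ℝ) T) ∧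
    ContinuousOn (Mtau U B y₀ z_d T) (Ico (0 : ℝ) T) ∧
    (∀ τ ∈ Ico (0 : ℝ) T, Mtau U B y₀ z_d T 0 ≤ Mtau U B y₀ z_d T τ) ∧
    Tendsto (Mtau U B y₀ z_d T) (𝓝[<] T) atTop := by
  have hV : IsUnitaryGroup (fun t => U (-t)) := hU.rev
  set x₀ := U T y₀ - z_d with hx₀_def
  have hx₀n : 0 < ‖x₀‖ := by rw [hx₀_def]; exact hrT
  have hx₀ : x₀ ≠ 0 := norm_pos_iff.mp hx₀n
  have key : ∀ τ ∈ Ico (0:ℝ) T,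
      Mtau U B y₀ z_d T τ = Mmin (fun t => U (-t)) B x₀ (T - τ) := by
    intro τ hτ
    rw [hx₀_def]
    exact Mtau_eq_Mmin hU hB hECrev hτ.1 hτ.2 y₀ z_d
  have hmono : StrictMonoOn (Mtau U B y₀ z_d T) (Ico (0:ℝ) T) := by
    intro τ₁ h₁ τ₂ h₂ hlt
    rw [key τ₁ h₁, key τ₂ h₂]
    exact Mmin_strictAnti hV hB hECrev (by linarith [h₂.2]) (by linarith) hx₀
  refine ⟨hmono, ?_, ?_, ?_⟩
  · have hcont : ContinuousOn (fun τ => Mmin (fun t => U (-t)) B x₀ (T - τ)) (Ico (0:ℝ) T) := by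
      intro τ hτ
      apply ContinuousAt.continuousWithinAt
      have h1 : ContinuousAt (fun S => Mmin (fun t => U (-t)) B x₀ S) (T - τ) :=
        Mmin_continuousAt hV hB hx₀ hECrev hBBrev hETrev (by linarith [hτ.2])
      exact h1.comp ((continuous_const.sub continuous_id).continuousAt)
    exact hcont.congr key
  · intro τ hτ
    rcases eq_or_lt_of_le hτ.1 with he | hlt
    · rw [← he]
    · exact (hmono ⟨le_refl 0, hT⟩ hτ hlt).le
  · rw [tendsto_atTop]
    intro b
    set M1 := max b 1 with hM1_def
    have hM1 : 0 < M1 := lt_of_lt_of_le one_pos (le_max_right b 1)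
    set ε := ‖x₀‖ / M1 with hε_def
    have hε : 0 < ε := div_pos hx₀n hM1
    have hmem : Ioo (max 0 (T - ε)) T ∈ 𝓝[<] T :=
      Ioo_mem_nhdsLT_of_mem ⟨max_lt hT (by linarith), le_refl T⟩
    filter_upwards [hmem] with τ hτm
    have hτIco : τ ∈ Ico (0:ℝ) T :=
      ⟨le_of_lt (lt_of_le_of_lt (le_max_left 0 (T - ε)) hτm.1), hτm.2⟩
    rw [key τ hτIco]
    have hTτ : 0 < T - τ := by linarith [hτm.2]
    have hTτε : T - τ ≤ ε := by
      have := lt_of_le_of_lt (le_max_right 0 (T - ε)) hτm.1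
      linarith
    have h1 : ‖x₀‖ / (T - τ) ≤ Mmin (fun t => U (-t)) B x₀ (T - τ) :=
      div_le_Mmin hV hB hECrev hTτ x₀
    have h2 : ‖x₀‖ / ε ≤ ‖x₀‖ / (T - τ) := by gcongr
    have h3 : ‖x₀‖ / ε = M1 := by
      rw [hε_def]
      field_simp
    have h4 : b ≤ M1 := le_max_left b 1
    linarith
end
end

section
/- Assume hypothesis (EC). For every τ ∈ [0,T) and M ≥ 0: (i) the problem (OP)^{M,τ} has an optimal control, i.e., there exists u* ∈ U_{M,τ} with ‖y(T;χ_{(τ,T)}u*,y₀) − z_d‖ = r(M,τ); (ii) if moreover M < M^τ, then r(M,τ) > 0. -/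
open MeasureTheory Set Filter Topology

noncomputable section

variable {H : Type*} [NormedAddCommGroup H] [InnerProductSpace ℂ H] [CompleteSpace H]
  [SecondCountableTopology H]

/-! ### Auxiliary lemmas -/

theorem unitaryGroup_jointly_continuous {U : ℝ → H →L[ℂ] H} (hU : IsUnitaryGroup U) :
    Continuous fun p : ℝ × H => U p.1 p.2 := by
  obtain ⟨-, -, hnorm, hcont⟩ := hU
  rw [continuous_iff_continuousAt]
  rintro ⟨t₀, x₀⟩
  have h1 : Tendsto (fun p : ℝ × H => U p.1 (p.2 - x₀)) (𝓝 (t₀, x₀)) (𝓝 0) := by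
    rw [tendsto_zero_iff_norm_tendsto_zero]
    have heq : (fun p : ℝ × H => ‖U p.1 (p.2 - x₀)‖) = fun p : ℝ × H => ‖p.2 - x₀‖ := by
      funext p; exact hnorm _ _
    rw [heq]
    have hc2 : Continuous fun p : ℝ × H => ‖p.2 - x₀‖ :=
      (continuous_snd.sub continuous_const).norm
    have h := hc2.tendsto ((t₀, x₀) : ℝ × H)
    simpa using h
  have h2 : Tendsto (fun p : ℝ × H => U p.1 x₀) (𝓝 (t₀, x₀)) (𝓝 (U t₀ x₀)) :=
    ((hcont x₀).comp continuous_fst).tendsto ((t₀, x₀) : ℝ × H)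
  have h3 := h1.add h2
  rw [zero_add] at h3
  have h4 : (fun p : ℝ × H => U p.1 (p.2 - x₀) + U p.1 x₀) = fun p : ℝ × H => U p.1 p.2 := by
    funext p; rw [map_sub]; abel
  rw [h4] at h3
  exact h3

theorem orthProj_norm_le {B : H →L[ℂ] H} (hB : IsOrthProj B) (x : H) : ‖B x‖ ≤ ‖x‖ := by
  obtain ⟨-, hidem, hsa⟩ := hB
  have hBBx : B (B x) = B x := by
    have := congrArg (fun f : H →L[ℂ] H => f x) hidem
    simpa using this
  have h1 : (inner ℂ (B x) (B x) : ℂ) = inner ℂ x (B x) := by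
    rw [hsa x (B x), hBBx]
  have h2 : ‖B x‖ ^ 2 = RCLike.re (inner ℂ x (B x) : ℂ) := by
    rw [← h1, inner_self_eq_norm_sq]
  have h3 : RCLike.re (inner ℂ x (B x) : ℂ) ≤ ‖(inner ℂ x (B x) : ℂ)‖ := RCLike.re_le_norm _
  have h4 : ‖(inner ℂ x (B x) : ℂ)‖ ≤ ‖x‖ * ‖B x‖ := norm_inner_le_norm _ _
  nlinarith [norm_nonneg (B x), norm_nonneg x]

theorem integrand_aesm {U : ℝ → H →L[ℂ] H} (hU : IsUnitaryGroup U) (B : H →L[ℂ] H)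
    (T : ℝ) {u : ℝ → H} {ν : Measure ℝ} (hu : AEStronglyMeasurable u ν) :
    AEStronglyMeasurable (fun s => U (T - s) (B (u s))) ν := by
  have hj : Continuous fun p : ℝ × H => U p.1 p.2 := unitaryGroup_jointly_continuous hU
  have h1 : AEStronglyMeasurable (fun s : ℝ => ((T - s, B (u s)) : ℝ × H)) ν :=
    ((measurable_const.sub measurable_id').aestronglyMeasurable).prodMk
      (B.continuous.comp_aestronglyMeasurable hu)
  exact hj.comp_aestronglyMeasurable h1

theorem integrand_integrable {U : ℝ → H →L[ℂ] H} (hU : IsUnitaryGroup U) {B : H →L[ℂ] H}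
    (hB : IsOrthProj B) (T : ℝ) {u : ℝ → H} {ν : Measure ℝ} [IsFiniteMeasure ν]
    (hu : AEStronglyMeasurable u ν) {c : ℝ} (hc : ∀ᵐ s ∂ν, ‖u s‖ ≤ c) :
    Integrable (fun s => U (T - s) (B (u s))) ν := by
  refine Integrable.mono' (integrable_const c) (integrand_aesm hU B T hu) ?_
  filter_upwards [hc] with s hs
  rw [hU.2.2.1 (T - s) (B (u s))]
  exact (orthProj_norm_le hB (u s)).trans hs

/-- A decreasing sequence of nonempty bounded closed convex subsets of a space satisfying
the parallelogram law has nonempty intersection. -/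
theorem nested_convex_inter_nonempty {F : Type*} [NormedAddCommGroup F] [NormedSpace ℝ F]
    [CompleteSpace F]
    (hpar : ∀ x y : F, ‖x + y‖ * ‖x + y‖ + ‖x - y‖ * ‖x - y‖
      = 2 * (‖x‖ * ‖x‖ + ‖y‖ * ‖y‖))
    (K : ℕ → Set F) (hne : ∀ n, (K n).Nonempty) (hcl : ∀ n, IsClosed (K n))
    (hconv : ∀ n, Convex ℝ (K n)) (hdec : ∀ m n, m ≤ n → K n ⊆ K m)
    {R : ℝ} (hR : ∀ x ∈ K 0, ‖x‖ ≤ R) :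
    (⋂ n, K n).Nonempty := by
  have hK0 : ∀ n, ∀ x ∈ K n, ‖x‖ ≤ R := fun n x hx => hR x (hdec 0 n (Nat.zero_le n) hx)
  set N : ℕ → Set ℝ := fun n => (fun x : F => ‖x‖) '' K n with hN
  have hNne : ∀ n, (N n).Nonempty := fun n => (hne n).image _
  have hNbdd : ∀ n, BddBelow (N n) := fun n => ⟨0, by rintro c ⟨x, -, rfl⟩; exact norm_nonneg x⟩
  set δ : ℕ → ℝ := fun n => sInf (N n) with hδ
  have hδ0 : ∀ n, 0 ≤ δ n := fun n =>
    le_csInf (hNne n) (by rintro c ⟨x, -, rfl⟩; exact norm_nonneg x)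
  have hδle : ∀ n, ∀ x ∈ K n, δ n ≤ ‖x‖ := fun n x hx => csInf_le (hNbdd n) ⟨x, hx, rfl⟩
  have hδR : ∀ n, δ n ≤ R := fun n => by
    obtain ⟨x, hx⟩ := hne n; exact (hδle n x hx).trans (hK0 n x hx)
  have hδmono : Monotone δ := fun m n hmn =>
    csInf_le_csInf (hNbdd m) (hNne n) (Set.image_mono (hdec m n hmn))
  have hv : ∀ n : ℕ, ∃ v ∈ K n, ‖v‖ < δ n + 1 / (n + 1) := by
    intro n
    obtain ⟨c, hc, hclt⟩ := exists_lt_of_csInf_lt (hNne n)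
      (lt_add_of_pos_right (δ n) (by positivity : (0:ℝ) < 1 / (n + 1)))
    obtain ⟨x, hx, rfl⟩ := hc
    exact ⟨x, hx, hclt⟩
  choose v hvK hvlt using hv
  have hbddA : BddAbove (Set.range δ) := by
    refine ⟨R, ?_⟩; rintro c ⟨n, rfl⟩; exact hδR n
  set L : ℝ := ⨆ n, δ n with hL
  have hδL : ∀ n, δ n ≤ L := fun n => le_ciSup hbddA n
  have hLtend : Tendsto δ atTop (𝓝 L) := tendsto_atTop_ciSup hδmono hbddA
  have hgtend : Tendsto (fun n : ℕ => 4 * ((L + 1 / (n + 1)) * (L + 1 / (n + 1)) - δ n * δ n))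
      atTop (𝓝 0) := by
    have h1 : Tendsto (fun n : ℕ => L + 1 / ((n : ℝ) + 1)) atTop (𝓝 (L + 0)) :=
      tendsto_const_nhds.add tendsto_one_div_add_atTop_nhds_zero_nat
    have h2 := ((h1.mul h1).sub (hLtend.mul hLtend)).const_mul (4:ℝ)
    simpa using h2
  have hcauchy : CauchySeq v := by
    rw [Metric.cauchySeq_iff]
    intro ε hε
    have hev : ∀ᶠ n : ℕ in atTop,
        4 * ((L + 1 / (n + 1)) * (L + 1 / (n + 1)) - δ n * δ n) < ε * ε :=
      hgtend.eventually_lt_const (by positivity)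
    obtain ⟨N0, hN0⟩ := eventually_atTop.1 hev
    refine ⟨N0, fun m hm n hn => ?_⟩
    have hminN : N0 ≤ min m n := le_min hm hn
    have hvmK : v m ∈ K (min m n) := hdec (min m n) m (min_le_left _ _) (hvK m)
    have hvnK : v n ∈ K (min m n) := hdec (min m n) n (min_le_right _ _) (hvK n)
    have hmid : (2⁻¹ : ℝ) • v m + (2⁻¹ : ℝ) • v n ∈ K (min m n) :=
      hconv (min m n) hvmK hvnK (by norm_num) (by norm_num) (by norm_num)
    have hmid' : δ (min m n) ≤ ‖(2⁻¹:ℝ) • v m + (2⁻¹:ℝ) • v n‖ := hδle _ _ hmid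
    have hmidnorm : ‖(2⁻¹:ℝ) • v m + (2⁻¹:ℝ) • v n‖ = 2⁻¹ * ‖v m + v n‖ := by
      rw [← smul_add, norm_smul, Real.norm_eq_abs]; norm_num
    have hsum : 2 * δ N0 ≤ ‖v m + v n‖ := by
      have := hδmono hminN
      rw [hmidnorm] at hmid'; linarith
    have h1 : (2 * δ N0) * (2 * δ N0) ≤ ‖v m + v n‖ * ‖v m + v n‖ :=
      mul_self_le_mul_self (by linarith [hδ0 N0]) hsum
    have hAm : ‖v m‖ ≤ L + 1 / (N0 + 1) := by
      have h1d : (1:ℝ) / (m + 1) ≤ 1 / (N0 + 1) := by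
        apply one_div_le_one_div_of_le (by positivity)
        have : (N0:ℝ) ≤ m := Nat.cast_le.2 hm
        linarith
      have := hvlt m
      have := hδL m
      linarith
    have hAn : ‖v n‖ ≤ L + 1 / (N0 + 1) := by
      have h1d : (1:ℝ) / (n + 1) ≤ 1 / (N0 + 1) := by
        apply one_div_le_one_div_of_le (by positivity)
        have : (N0:ℝ) ≤ n := Nat.cast_le.2 hn
        linarith
      have := hvlt n
      have := hδL n
      linarith
    have hA0 : (0:ℝ) ≤ L + 1 / (N0 + 1) := le_trans (norm_nonneg (v m)) hAm
    have h2 : ‖v m‖ * ‖v m‖ ≤ (L + 1 / (N0 + 1)) * (L + 1 / (N0 + 1)) :=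
      mul_self_le_mul_self (norm_nonneg _) hAm
    have h3 : ‖v n‖ * ‖v n‖ ≤ (L + 1 / (N0 + 1)) * (L + 1 / (N0 + 1)) :=
      mul_self_le_mul_self (norm_nonneg _) hAn
    have hpar' := hpar (v m) (v n)
    have h4 : ‖v m - v n‖ * ‖v m - v n‖
        ≤ 4 * ((L + 1 / (N0 + 1)) * (L + 1 / (N0 + 1)) - δ N0 * δ N0) := by nlinarith
    have h5 := hN0 N0 le_rfl
    rw [dist_eq_norm]
    nlinarith [norm_nonneg (v m - v n), hε]
  obtain ⟨x, hx⟩ := cauchySeq_tendsto_of_complete hcauchy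
  refine ⟨x, Set.mem_iInter.2 fun n => ?_⟩
  have hev : ∀ᶠ m in atTop, v m ∈ K n :=
    eventually_atTop.2 ⟨n, fun m hm => hdec n m hm (hvK m)⟩
  exact (hcl n).mem_of_tendsto hx hev

set_option maxHeartbeats 1000000 in
theorem op_has_optimal_control_and_positive_distance
    (U : ℝ → H →L[ℂ] H) (B : H →L[ℂ] H) (hU : IsUnitaryGroup U) (hB : IsOrthProj B)
    (hEC : EC U B) (hECrev : EC (fun t => U (-t)) B)
    (T : ℝ) (hT : 0 < T) (y₀ z_d : H) (hrT : 0 < ‖U T y₀ - z_d‖)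
    (τ M : ℝ) (hτ : τ ∈ Ico (0 : ℝ) T) (hM : 0 ≤ M) :
    (∃ u : ℝ → H, u ∈ UadmSet M τ T ∧
      ‖stateT U B T τ u y₀ - z_d‖ = rOP U B y₀ z_d T M τ) ∧
    (M < Mtau U B y₀ z_d T τ → 0 < rOP U B y₀ z_d T M τ) := by
  classical
  obtain ⟨hU0, hUgrp, hUnorm, hUcont⟩ := id hU
  set μ : Measure ℝ := volume.restrict (Ioo τ T) with hμ
  haveI : IsFiniteMeasure μ := by
    constructor
    rw [hμ, Measure.restrict_apply_univ, Real.volume_Ioo]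
    exact ENNReal.ofReal_lt_top
  set d : H := U T y₀ - z_d with hd
  have hstate : ∀ u : ℝ → H,
      stateT U B T τ u y₀ - z_d = (∫ s, U (T - s) (B (u s)) ∂μ) + d := by
    intro u
    simp only [stateT, hd, hμ]
    abel
  have hint : ∀ (w : ℝ → H) (c : ℝ), AEStronglyMeasurable w μ → (∀ᵐ s ∂μ, ‖w s‖ ≤ c) →
      Integrable (fun s => U (T - s) (B (w s))) μ :=
    fun w c hw hc => integrand_integrable hU hB T hw hc
  set S : Set ℝ := (fun u : ℝ → H => ‖stateT U B T τ u y₀ - z_d‖) '' UadmSet M τ T with hS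
  have hrop : rOP U B y₀ z_d T M τ = sInf S := rfl
  have hzero_mem : (fun _ : ℝ => (0:H)) ∈ UadmSet M τ T := by
    refine ⟨⟨aestronglyMeasurable_const, 0, Eventually.of_forall fun t _ => by simp⟩,
      Eventually.of_forall fun t _ => by simpa using hM⟩
  have hSne : S.Nonempty := ⟨_, ⟨_, hzero_mem, rfl⟩⟩
  have hSbdd : BddBelow S := ⟨0, by rintro c ⟨u, -, rfl⟩; exact norm_nonneg _⟩
  set r : ℝ := sInf S with hr
  have hr0 : 0 ≤ r := le_csInf hSne (by rintro c ⟨u, -, rfl⟩; exact norm_nonneg _)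
  -- Step A : from an admissible control to an element of L²
  have stepA : ∀ u ∈ UadmSet M τ T, ∃ f : MeasureTheory.Lp H 2 μ,
      (∀ᵐ s ∂μ, ‖(f : ℝ → H) s‖ ≤ M) ∧
      (∫ s, U (T - s) (B ((f : ℝ → H) s)) ∂μ) = ∫ s, U (T - s) (B (u s)) ∂μ := by
    intro u hu
    obtain ⟨⟨hum, -⟩, hubd⟩ := hu
    have huμ : AEStronglyMeasurable u μ := hum.restrict
    have hbdμ : ∀ᵐ s ∂μ, ‖u s‖ ≤ M := by
      filter_upwards [ae_restrict_of_ae hubd, ae_restrict_mem measurableSet_Ioo] with s h1 h2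
      exact h1 h2
    have hmem : MemLp u 2 μ := MemLp.of_bound huμ M hbdμ
    refine ⟨hmem.toLp u, ?_, ?_⟩
    · filter_upwards [hmem.coeFn_toLp, hbdμ] with s h1 h2
      rw [h1]; exact h2
    · exact integral_congr_ae ((hmem.coeFn_toLp).mono fun s h => by simp only [h])
  -- Step B : from an element of L² to an admissible control
  have stepB : ∀ f : MeasureTheory.Lp H 2 μ, (∀ᵐ s ∂μ, ‖(f : ℝ → H) s‖ ≤ M) →
      ∃ u ∈ UadmSet M τ T,
        (∫ s, U (T - s) (B (u s)) ∂μ) = (∫ s, U (T - s) (B ((f : ℝ → H) s)) ∂μ) ∧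
        (∀ᵐ t : ℝ ∂volume, t ∈ Ioo τ T → ‖u t‖ ≤ M) := by
    intro f hf
    have haes := MeasureTheory.Lp.aestronglyMeasurable f
    set g : ℝ → H := haes.mk _ with hg
    have hgsm : StronglyMeasurable g := haes.stronglyMeasurable_mk
    have hgeq : (f : ℝ → H) =ᵐ[μ] g := haes.ae_eq_mk
    set A : Set ℝ := {s | ‖g s‖ ≤ M} with hA
    have hAmeas : MeasurableSet A := measurableSet_le hgsm.norm.measurable measurable_const
    set u : ℝ → H := A.indicator g with hu
    have husm : StronglyMeasurable u := hgsm.indicator hAmeas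
    have hubd : ∀ s, ‖u s‖ ≤ M := by
      intro s
      by_cases hs : s ∈ A
      · rw [hu, Set.indicator_of_mem hs]; exact hs
      · rw [hu, Set.indicator_of_notMem hs]; simpa using hM
    have hueq : u =ᵐ[μ] (f : ℝ → H) := by
      filter_upwards [hgeq, hf] with s h1 h2
      have hsA : s ∈ A := by rw [hA]; show ‖g s‖ ≤ M; rw [← h1]; exact h2
      rw [hu, Set.indicator_of_mem hsA, ← h1]
    refine ⟨u, ⟨⟨husm.aestronglyMeasurable, M, Eventually.of_forall fun t _ => hubd t⟩,
      Eventually.of_forall fun t _ => hubd t⟩, ?_, Eventually.of_forall fun t _ => hubd t⟩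
    exact integral_congr_ae (hueq.mono fun s h => by simp only [h])
  -- the nested family of constraint sets in L²
  set Kc : ℕ → Set (MeasureTheory.Lp H 2 μ) := fun n =>
    {f | (∀ᵐ s ∂μ, ‖(f : ℝ → H) s‖ ≤ M) ∧
      ‖(∫ s, U (T - s) (B ((f : ℝ → H) s)) ∂μ) + d‖ ≤ r + 1 / (n + 1)} with hKc
  have hKne : ∀ n, (Kc n).Nonempty := by
    intro n
    have hlt : sInf S < r + 1 / ((n:ℝ) + 1) := by
      rw [← hr]; exact lt_add_of_pos_right r (by positivity)
    obtain ⟨c, ⟨u, hu, rfl⟩, hclt⟩ := exists_lt_of_csInf_lt hSne hlt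
    obtain ⟨f, hf1, hf2⟩ := stepA u hu
    refine ⟨f, hf1, ?_⟩
    rw [hf2, ← hstate u]
    exact hclt.le
  have hKcl : ∀ n, IsClosed (Kc n) := by
    intro n
    rw [← isSeqClosed_iff_isClosed]
    intro gseq f hgs hlim
    have htnorm : Tendsto (fun j => ‖gseq j - f‖) atTop (𝓝 0) :=
      tendsto_iff_norm_sub_tendsto_zero.mp hlim
    have heLp : Tendsto (fun j => eLpNorm ((gseq j : ℝ → H) - (f : ℝ → H)) 2 μ) atTop (𝓝 0) := by
      have hofr : Tendsto (fun j => ENNReal.ofReal ‖gseq j - f‖) atTop (𝓝 0) := by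
        have h := (ENNReal.continuous_ofReal.tendsto 0).comp htnorm
        simpa [Function.comp_def] using h
      refine hofr.congr fun j => ?_
      rw [MeasureTheory.Lp.norm_def, ENNReal.ofReal_toReal (MeasureTheory.Lp.eLpNorm_ne_top _)]
      exact eLpNorm_congr_ae (MeasureTheory.Lp.coeFn_sub (gseq j) f)
    have htim : TendstoInMeasure μ (fun j => ((gseq j : ℝ → H))) atTop (f : ℝ → H) :=
      tendstoInMeasure_of_tendsto_eLpNorm (by norm_num)
        (fun j => MeasureTheory.Lp.aestronglyMeasurable _)
        (MeasureTheory.Lp.aestronglyMeasurable f) heLp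
    obtain ⟨ns, -, haets⟩ := htim.exists_seq_tendsto_ae
    have hbdall : ∀ᵐ s ∂μ, ∀ i, ‖(gseq (ns i) : ℝ → H) s‖ ≤ M :=
      ae_all_iff.2 fun i => (hgs (ns i)).1
    have hfC : ∀ᵐ s ∂μ, ‖(f : ℝ → H) s‖ ≤ M := by
      filter_upwards [haets, hbdall] with s h1 h2
      exact le_of_tendsto h1.norm (Eventually.of_forall h2)
    refine ⟨hfC, ?_⟩
    have hItend : Tendsto (fun i => ∫ s, U (T - s) (B ((gseq (ns i) : ℝ → H) s)) ∂μ) atTop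
        (𝓝 (∫ s, U (T - s) (B ((f : ℝ → H) s)) ∂μ)) := by
      refine tendsto_integral_of_dominated_convergence (fun _ => M)
        (fun i => integrand_aesm hU B T (MeasureTheory.Lp.aestronglyMeasurable _))
        (integrable_const M) (fun i => ?_) ?_
      · filter_upwards [(hgs (ns i)).1] with s hs
        calc ‖U (T - s) (B ((gseq (ns i) : ℝ → H) s))‖
            = ‖B ((gseq (ns i) : ℝ → H) s)‖ := hUnorm _ _
          _ ≤ ‖(gseq (ns i) : ℝ → H) s‖ := orthProj_norm_le hB _
          _ ≤ M := hs
      · filter_upwards [haets] with s hs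
        exact ((((U (T - s)).continuous.comp B.continuous).tendsto _).comp hs)
    exact le_of_tendsto ((hItend.add_const d).norm)
      (Eventually.of_forall fun i => (hgs (ns i)).2)
  have hKcv : ∀ n, Convex ℝ (Kc n) := by
    intro n f hfK g hgK a b ha hb hab
    have hcoe : ⇑(a • f + b • g) =ᵐ[μ] fun s => a • (f : ℝ → H) s + b • (g : ℝ → H) s := by
      filter_upwards [MeasureTheory.Lp.coeFn_add (a • f) (b • g),
        MeasureTheory.Lp.coeFn_smul a f, MeasureTheory.Lp.coeFn_smul b g] with s h1 h2 h3
      rw [h1]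
      simp only [Pi.add_apply, h2, h3, Pi.smul_apply]
    have hIf := hint _ M (MeasureTheory.Lp.aestronglyMeasurable f) hfK.1
    have hIg := hint _ M (MeasureTheory.Lp.aestronglyMeasurable g) hgK.1
    constructor
    · filter_upwards [hcoe, hfK.1, hgK.1] with s h1 h2 h3
      rw [h1]
      calc ‖a • (f : ℝ → H) s + b • (g : ℝ → H) s‖
          ≤ ‖a • (f : ℝ → H) s‖ + ‖b • (g : ℝ → H) s‖ := norm_add_le _ _
        _ = a * ‖(f : ℝ → H) s‖ + b * ‖(g : ℝ → H) s‖ := by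
            rw [norm_smul, norm_smul, Real.norm_eq_abs, Real.norm_eq_abs,
              abs_of_nonneg ha, abs_of_nonneg hb]
        _ ≤ a * M + b * M :=
            add_le_add (mul_le_mul_of_nonneg_left h2 ha) (mul_le_mul_of_nonneg_left h3 hb)
        _ = M := by rw [← add_mul, hab, one_mul]
    · have hIeq : (∫ s, U (T - s) (B ((⇑(a • f + b • g)) s)) ∂μ)
          = a • (∫ s, U (T - s) (B ((f : ℝ → H) s)) ∂μ)
            + b • (∫ s, U (T - s) (B ((g : ℝ → H) s)) ∂μ) := by
        have hIfa : Integrable (fun s => a • (U (T - s)) (B ((f : ℝ → H) s))) μ := hIf.smul a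
        have hIgb : Integrable (fun s => b • (U (T - s)) (B ((g : ℝ → H) s))) μ := hIg.smul b
        calc ∫ s, U (T - s) (B ((⇑(a • f + b • g)) s)) ∂μ
            = ∫ s, (a • (U (T - s)) (B ((f : ℝ → H) s))
                + b • (U (T - s)) (B ((g : ℝ → H) s))) ∂μ := by
              refine integral_congr_ae (hcoe.mono fun s h => ?_)
              simp only [h, map_add, ContinuousLinearMap.map_smul_of_tower]
          _ = (∫ s, a • (U (T - s)) (B ((f : ℝ → H) s)) ∂μ)
                + ∫ s, b • (U (T - s)) (B ((g : ℝ → H) s)) ∂μ := integral_add hIfa hIgb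
          _ = a • (∫ s, U (T - s) (B ((f : ℝ → H) s)) ∂μ)
                + b • (∫ s, U (T - s) (B ((g : ℝ → H) s)) ∂μ) := by
              rw [integral_smul, integral_smul]
      show ‖(∫ s, U (T - s) (B ((⇑(a • f + b • g)) s)) ∂μ) + d‖ ≤ r + 1 / (n + 1)
      rw [hIeq]
      have h1 : a • ((∫ s, U (T - s) (B ((f : ℝ → H) s)) ∂μ) + d)
            + b • ((∫ s, U (T - s) (B ((g : ℝ → H) s)) ∂μ) + d)
          = a • (∫ s, U (T - s) (B ((f : ℝ → H) s)) ∂μ)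
            + b • (∫ s, U (T - s) (B ((g : ℝ → H) s)) ∂μ) + (a + b) • d := by
        rw [smul_add, smul_add, add_smul]; abel
      rw [hab, one_smul] at h1
      rw [← h1]
      calc ‖a • ((∫ s, U (T - s) (B ((f : ℝ → H) s)) ∂μ) + d)
            + b • ((∫ s, U (T - s) (B ((g : ℝ → H) s)) ∂μ) + d)‖
          ≤ a * ‖(∫ s, U (T - s) (B ((f : ℝ → H) s)) ∂μ) + d‖
            + b * ‖(∫ s, U (T - s) (B ((g : ℝ → H) s)) ∂μ) + d‖ := by
            refine (norm_add_le _ _).trans ?_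
            rw [norm_smul, norm_smul, Real.norm_eq_abs, Real.norm_eq_abs,
              abs_of_nonneg ha, abs_of_nonneg hb]
        _ ≤ a * (r + 1 / (n + 1)) + b * (r + 1 / (n + 1)) :=
            add_le_add (mul_le_mul_of_nonneg_left hfK.2 ha)
              (mul_le_mul_of_nonneg_left hgK.2 hb)
        _ = r + 1 / (n + 1) := by rw [← add_mul, hab, one_mul]
  have hKdec : ∀ m n : ℕ, m ≤ n → Kc n ⊆ Kc m := by
    intro m n hmn f hf
    refine ⟨hf.1, hf.2.trans ?_⟩
    have : (1:ℝ) / (n + 1) ≤ 1 / (m + 1) := by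
      apply one_div_le_one_div_of_le (by positivity)
      have : (m:ℝ) ≤ n := Nat.cast_le.2 hmn
      linarith
    linarith
  have hKbd : ∀ x ∈ Kc 0, ‖x‖ ≤ ((μ Set.univ) ^ (2:ENNReal).toReal⁻¹ * ENNReal.ofReal M).toReal := by
    intro f hf
    rw [MeasureTheory.Lp.norm_def]
    apply ENNReal.toReal_mono
    · exact ENNReal.mul_ne_top
        (ENNReal.rpow_ne_top_of_nonneg (by norm_num) (measure_ne_top μ _))
        ENNReal.ofReal_ne_top
    · exact eLpNorm_le_of_ae_bound hf.1
  obtain ⟨fstar, hfstar⟩ := nested_convex_inter_nonempty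
    (fun x y => by have := parallelogram_law_with_norm ℂ x y; simpa only [sq] using this) Kc hKne hKcl hKcv hKdec hKbd
  have hfC : ∀ᵐ s ∂μ, ‖(fstar : ℝ → H) s‖ ≤ M := (Set.mem_iInter.1 hfstar 0).1
  have hfval : ‖(∫ s, U (T - s) (B ((fstar : ℝ → H) s)) ∂μ) + d‖ ≤ r := by
    have hten : Tendsto (fun n : ℕ => r + 1 / ((n:ℝ) + 1)) atTop (𝓝 (r + 0)) :=
      tendsto_const_nhds.add tendsto_one_div_add_atTop_nhds_zero_nat
    rw [add_zero] at hten
    exact ge_of_tendsto hten (Eventually.of_forall fun n => (Set.mem_iInter.1 hfstar n).2)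
  obtain ⟨ustar, hustar, hueq, huebd⟩ := stepB fstar hfC
  have hval : ‖stateT U B T τ ustar y₀ - z_d‖ = r := by
    have h1 : ‖stateT U B T τ ustar y₀ - z_d‖ ≤ r := by
      rw [hstate ustar, hueq]; exact hfval
    have h2 : r ≤ ‖stateT U B T τ ustar y₀ - z_d‖ := csInf_le hSbdd ⟨ustar, hustar, rfl⟩
    linarith
  refine ⟨⟨ustar, hustar, by rw [hrop]; exact hval⟩, ?_⟩
  intro hMlt
  by_contra hnp
  push_neg at hnp
  have hreq : r = 0 := le_antisymm (hrop ▸ hnp) hr0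
  have hsteer : stateT U B T τ ustar y₀ = z_d := by
    have h0 : ‖stateT U B T τ ustar y₀ - z_d‖ = 0 := by rw [hval, hreq]
    rwa [norm_eq_zero, sub_eq_zero] at h0
  have hsup_nonneg : ∀ w : ℝ → H, 0 ≤ supNorm w τ T := fun w =>
    Real.sInf_nonneg fun c hc => hc.1
  have hsupbd : supNorm ustar τ T ≤ M := csInf_le ⟨0, fun c hc => hc.1⟩ ⟨hM, huebd⟩
  have hMt : Mtau U B y₀ z_d T τ ≤ supNorm ustar τ T := by
    apply csInf_le
    · exact ⟨0, by rintro c ⟨w, -, rfl⟩; exact hsup_nonneg w⟩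
    · exact ⟨ustar, ⟨hustar.1, hsteer⟩, rfl⟩
  linarith
end
end

section
/- (Feedback form of the optimal control.) Assume hypotheses (EC) and (UC). Let τ ∈ [0,T) and 0 ≤ M < M^τ. Then u* is an optimal control to (OP)^{M,τ} if and only if u* ∈ L∞((0,T);H) satisfies u*(t) = M · Bφ*(t)/‖Bφ*(t)‖ for a.e. t ∈ (τ,T), where φ*(t) = U(t−T)(z_d − y(T;χ_{(τ,T)}u*,y₀)); moreover for any optimal control u*, Bφ*(t) ≠ 0 for a.e. t ∈ (τ,T). -/
open MeasureTheory Set Filter Topology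

noncomputable section

variable {H : Type*} [NormedAddCommGroup H] [InnerProductSpace ℂ H] [CompleteSpace H]
  [SecondCountableTopology H]

namespace OPaux

variable {Hp : Type*} [NormedAddCommGroup Hp] [InnerProductSpace ℂ Hp]

lemma ptA (M : ℝ) (hM : 0 ≤ M) (w : Hp) :
    ‖(M / ‖w‖) • w‖ ≤ M ∧ RCLike.re (inner ℂ w ((M / ‖w‖) • w) : ℂ) = M * ‖w‖ := by
  rcases eq_or_ne w 0 with h | h
  · simp [h, hM]
  · have hw : (0:ℝ) < ‖w‖ := norm_pos_iff.2 h
    constructor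
    · rw [norm_smul, Real.norm_eq_abs, abs_of_nonneg (div_nonneg hM hw.le),
        div_mul_cancel₀ _ hw.ne']
    · rw [RCLike.real_smul_eq_coe_smul (K := ℂ), inner_smul_right, RCLike.re_ofReal_mul,
        inner_self_eq_norm_sq]
      field_simp

lemma ptC (M : ℝ) (hM : 0 ≤ M) (w x : Hp) (hw : w ≠ 0) (hx : ‖x‖ ≤ M)
    (h : RCLike.re (inner ℂ w x : ℂ) = M * ‖w‖) : x = (M / ‖w‖) • w := by
  have hw' : (0:ℝ) < ‖w‖ := norm_pos_iff.2 hw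
  have hxw : RCLike.re (inner ℂ x w : ℂ) = M * ‖w‖ := by rw [inner_re_symm]; exact h
  have hxM : ‖x‖ = M := by
    have h1 : M * ‖w‖ ≤ ‖w‖ * ‖x‖ := h ▸ re_inner_le_norm (𝕜 := ℂ) w x
    nlinarith [re_inner_le_norm (𝕜 := ℂ) w x, norm_nonneg x]
  have hyn : ‖(M / ‖w‖) • w‖ = M := by
    rw [norm_smul, Real.norm_eq_abs, abs_of_nonneg (div_nonneg hM hw'.le),
      div_mul_cancel₀ _ hw'.ne']
  have hre : RCLike.re (inner ℂ x ((M / ‖w‖) • w) : ℂ) = M ^ 2 := by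
    rw [RCLike.real_smul_eq_coe_smul (K := ℂ), inner_smul_right, RCLike.re_ofReal_mul, hxw]
    field_simp
  have hns : ‖x - (M / ‖w‖) • w‖ ^ 2 = 0 := by
    rw [norm_sub_sq (𝕜 := ℂ), hre, hxM, hyn]; ring
  have := pow_eq_zero_iff (n := 2) (by norm_num) |>.1 hns
  rw [norm_eq_zero, sub_eq_zero] at this
  exact this


end OPaux

namespace OPaux

variable {U : ℝ → H →L[ℂ] H} {B : H →L[ℂ] H}
set_option linter.unusedSectionVars false

lemma UG.cancel (hU : IsUnitaryGroup U) (t : ℝ) (x : H) : U t (U (-t) x) = x := by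
  have h := hU.2.1 t (-t)
  rw [add_neg_cancel, hU.1] at h
  have := congrFun (congrArg DFunLike.coe h) x
  simpa using this.symm

lemma UG.inner_map (hU : IsUnitaryGroup U) (t : ℝ) (x y : H) :
    (inner ℂ (U t x) (U t y) : ℂ) = inner ℂ x y := by
  let L : H →ₗᵢ[ℂ] H := ⟨(U t).toLinearMap, hU.2.2.1 t⟩
  exact L.inner_map_map x y

lemma UG.inner_shift (hU : IsUnitaryGroup U) (t : ℝ) (η x : H) :
    (inner ℂ η (U t x) : ℂ) = inner ℂ (U (-t) η) x := by
  conv_lhs => rw [show η = U t (U (-t) η) from (UG.cancel hU t η).symm]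
  rw [UG.inner_map hU]

lemma UG.cont (hU : IsUnitaryGroup U) : Continuous fun p : ℝ × H => U p.1 p.2 := by
  rw [continuous_iff_continuousAt]
  intro p
  rw [ContinuousAt, tendsto_iff_dist_tendsto_zero]
  apply squeeze_zero (fun q => dist_nonneg)
    (g := fun q : ℝ × H => dist q.2 p.2 + dist (U q.1 p.2) (U p.1 p.2))
  · intro q
    calc dist (U q.1 q.2) (U p.1 p.2)
        ≤ dist (U q.1 q.2) (U q.1 p.2) + dist (U q.1 p.2) (U p.1 p.2) := dist_triangle _ _ _
      _ = dist q.2 p.2 + dist (U q.1 p.2) (U p.1 p.2) := by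
          congr 1
          rw [dist_eq_norm, dist_eq_norm, ← map_sub, hU.2.2.1]
  · have h1 : Tendsto (fun q : ℝ × H => dist q.2 p.2) (𝓝 p) (𝓝 0) := by
      have : Continuous fun q : ℝ × H => dist q.2 p.2 := (continuous_snd.dist continuous_const)
      simpa using this.tendsto p
    have h2 : Tendsto (fun q : ℝ × H => dist (U q.1 p.2) (U p.1 p.2)) (𝓝 p) (𝓝 0) := by
      have : Continuous fun q : ℝ × H => dist (U q.1 p.2) (U p.1 p.2) :=
        (((hU.2.2.2 p.2).comp continuous_fst).dist continuous_const)
      simpa using this.tendsto p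
    simpa using h1.add h2

lemma aesm_integrand (hU : IsUnitaryGroup U) {w : ℝ → H}
    (hw : AEStronglyMeasurable w (volume : Measure ℝ)) (T : ℝ) :
    AEStronglyMeasurable (fun s : ℝ => U (T - s) (B (w s))) (volume : Measure ℝ) := by
  have hc : Continuous fun p : ℝ × H => U (T - p.1) (B p.2) :=
    (UG.cont hU).comp ((continuous_const.sub continuous_fst).prodMk (B.continuous.comp continuous_snd))
  exact hc.comp_aestronglyMeasurable (measurable_id.aestronglyMeasurable.prodMk hw)

lemma integrable_integrand (hU : IsUnitaryGroup U) {w : ℝ → H} {τ T c : ℝ}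
    (hw : AEStronglyMeasurable w (volume : Measure ℝ))
    (hc : ∀ᵐ t : ℝ ∂volume, t ∈ Ioo τ T → ‖w t‖ ≤ c) :
    IntegrableOn (fun s : ℝ => U (T - s) (B (w s))) (Ioo τ T) volume := by
  apply Integrable.mono' (g := fun _ => ‖B‖ * max c 0)
    (integrableOn_const measure_Ioo_lt_top.ne)
    ((aesm_integrand hU hw T).restrict)
  rw [ae_restrict_iff' measurableSet_Ioo]
  filter_upwards [hc] with t ht hmem
  calc ‖U (T - t) (B (w t))‖ = ‖B (w t)‖ := hU.2.2.1 _ _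
    _ ≤ ‖B‖ * ‖w t‖ := B.le_opNorm _
    _ ≤ ‖B‖ * max c 0 := by
        apply mul_le_mul_of_nonneg_left (le_trans (ht hmem) (le_max_left _ _)) (norm_nonneg _)

lemma key_re (hU : IsUnitaryGroup U) (hB : IsOrthProj B) {w : ℝ → H} {τ T : ℝ}
    (hint : IntegrableOn (fun s : ℝ => U (T - s) (B (w s))) (Ioo τ T) volume) (η : H) :
    RCLike.re (inner ℂ η (∫ s in Ioo τ T, U (T - s) (B (w s))) : ℂ)
      = ∫ s in Ioo τ T, RCLike.re (inner ℂ (B (U (s - T) η)) (w s) : ℂ) := by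
  have h1 : (inner ℂ η (∫ s in Ioo τ T, U (T - s) (B (w s))) : ℂ)
      = ∫ s in Ioo τ T, (inner ℂ η (U (T - s) (B (w s))) : ℂ) :=
    (ContinuousLinearMap.integral_comp_comm (innerSL ℂ η) hint).symm
  have h2 : ∀ s : ℝ, (inner ℂ η (U (T - s) (B (w s))) : ℂ) = inner ℂ (B (U (s - T) η)) (w s) := by
    intro s
    rw [UG.inner_shift hU, hB.2.2]
    norm_num
  have hI : Integrable (fun s : ℝ => (inner ℂ η (U (T - s) (B (w s))) : ℂ))
      (volume.restrict (Ioo τ T)) := by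
    have := (innerSL ℂ η).integrable_comp hint
    simpa [innerSL_apply_apply] using this
  rw [h1, ← integral_re hI]
  exact setIntegral_congr_fun measurableSet_Ioo (fun s _ => by rw [h2 s])

end OPaux

set_option maxHeartbeats 2000000 in
theorem op_feedback_form
    (U : ℝ → H →L[ℂ] H) (B : H →L[ℂ] H) (hU : IsUnitaryGroup U) (hB : IsOrthProj B)
    (hEC : EC U B) (hECrev : EC (fun t => U (-t)) B)
    (hUC : UC U B)
    (T : ℝ) (hT : 0 < T) (y₀ z_d : H) (hrT : 0 < ‖U T y₀ - z_d‖)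
    (τ M : ℝ) (hτ : τ ∈ Ico (0 : ℝ) T) (hM : 0 ≤ M) (hMlt : M < Mtau U B y₀ z_d T τ) :
    (∀ u : ℝ → H, IsOptOP U B y₀ z_d T M τ u ↔
      MemLinfty u 0 T ∧ ∀ᵐ t : ℝ ∂volume, t ∈ Ioo τ T →
        u t = (M / ‖B (adjState U B y₀ z_d T τ u t)‖) • B (adjState U B y₀ z_d T τ u t)) ∧
    (∀ u : ℝ → H, IsOptOP U B y₀ z_d T M τ u →
      ∀ᵐ t : ℝ ∂volume, t ∈ Ioo τ T → B (adjState U B y₀ z_d T τ u t) ≠ 0) := by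
  classical
  obtain ⟨hτ0, hτT⟩ := hτ
  open OPaux in
  -- Claim 0: no admissible control reaches `z_d` exactly
  have hMne : ∀ u : ℝ → H, MemLinfty u 0 T →
      (∀ᵐ t : ℝ ∂volume, t ∈ Ioo τ T → ‖u t‖ ≤ M) → stateT U B T τ u y₀ ≠ z_d := by
    intro u hmem hbd heq
    have h1 : supNorm u τ T ≤ M := by
      simp only [supNorm]
      exact csInf_le ⟨0, fun c hc => hc.1⟩ ⟨hM, hbd⟩
    have h2 : Mtau U B y₀ z_d T τ ≤ supNorm u τ T := by
      simp only [Mtau]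
      apply csInf_le
      · refine ⟨0, ?_⟩
        rintro x ⟨v, hv, rfl⟩
        exact Real.sInf_nonneg fun c hc => hc.1
      · exact ⟨u, ⟨hmem, heq⟩, rfl⟩
    linarith
  -- Claim: the adjoint state does not vanish a.e. once the target is not reached
  have hphi : ∀ u : ℝ → H, stateT U B T τ u y₀ ≠ z_d →
      ∀ᵐ t : ℝ ∂volume, t ∈ Ioo τ T → B (adjState U B y₀ z_d T τ u t) ≠ 0 := by
    intro u hne
    have hη : z_d - stateT U B T τ u y₀ ≠ 0 := sub_ne_zero.2 (Ne.symm hne)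
    have h1 : volume ((fun t : ℝ => t - T) ⁻¹'
        {t : ℝ | B (U t (z_d - stateT U B T τ u y₀)) = 0}) = 0 :=
      (measurePreserving_sub_right volume T).quasiMeasurePreserving.preimage_null (hUC _ hη)
    filter_upwards [measure_eq_zero_iff_ae_notMem.1 h1] with t ht _ hzero
    exact ht hzero
  -- passing a bound from `(0,T)` to `(τ,T)`
  have hsubI : ∀ {c : ℝ} {u : ℝ → H}, (∀ᵐ t : ℝ ∂volume, t ∈ Ioo 0 T → ‖u t‖ ≤ c) →
      ∀ᵐ t : ℝ ∂volume, t ∈ Ioo τ T → ‖u t‖ ≤ c := by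
    intro c u h
    filter_upwards [h] with t h1 h2
    exact h1 ⟨lt_of_le_of_lt hτ0 h2.1, h2.2⟩
  -- difference of two states
  have hdiff : ∀ u v : ℝ → H,
      IntegrableOn (fun s : ℝ => U (T - s) (B (u s))) (Ioo τ T) volume →
      IntegrableOn (fun s : ℝ => U (T - s) (B (v s))) (Ioo τ T) volume →
      stateT U B T τ u y₀ - stateT U B T τ v y₀
        = ∫ s in Ioo τ T, U (T - s) (B (u s - v s)) := by
    intro u v hu hv
    have heq : (fun s : ℝ => U (T - s) (B (u s - v s)))
        = fun s : ℝ => U (T - s) (B (u s)) - U (T - s) (B (v s)) := by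
      funext s; rw [map_sub, map_sub]
    rw [heq, integral_sub hu hv]
    simp only [stateT]
    abel
  -- the backward implication
  have hIopt : ∀ u : ℝ → H, MemLinfty u 0 T →
      (∀ᵐ t : ℝ ∂volume, t ∈ Ioo τ T →
        u t = (M / ‖B (adjState U B y₀ z_d T τ u t)‖) • B (adjState U B y₀ z_d T τ u t)) →
      IsOptOP U B y₀ z_d T M τ u := by
    intro u hmem hform
    have hbd : ∀ᵐ t : ℝ ∂volume, t ∈ Ioo τ T → ‖u t‖ ≤ M := by
      filter_upwards [hform] with t ht hm
      rw [ht hm]; exact (OPaux.ptA M hM _).1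
    have huadm : u ∈ UadmSet (H := H) M τ T := ⟨hmem, hbd⟩
    have hne : stateT U B T τ u y₀ ≠ z_d := hMne u hmem hbd
    have hηpos : 0 < ‖z_d - stateT U B T τ u y₀‖ :=
      norm_pos_iff.2 (sub_ne_zero.2 (Ne.symm hne))
    obtain ⟨cu, hcu⟩ := hmem.2
    have hintu : IntegrableOn (fun s : ℝ => U (T - s) (B (u s))) (Ioo τ T) volume :=
      OPaux.integrable_integrand hU hmem.1 (hsubI hcu)
    have hlow : ∀ v ∈ UadmSet (H := H) M τ T,
        ‖z_d - stateT U B T τ u y₀‖ ≤ ‖stateT U B T τ v y₀ - z_d‖ := by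
      rintro v ⟨hvmem, hvbd⟩
      have hintv : IntegrableOn (fun s : ℝ => U (T - s) (B (v s))) (Ioo τ T) volume :=
        OPaux.integrable_integrand hU hvmem.1 hvbd
      have hintw : IntegrableOn (fun s : ℝ => U (T - s) (B (u s - v s))) (Ioo τ T) volume := by
        simpa [map_sub, Pi.sub_def] using hintu.sub hintv
      have hkey := OPaux.key_re hU hB hintw (z_d - stateT U B T τ u y₀)
      have hpt : ∀ᵐ s : ℝ ∂volume.restrict (Ioo τ T), 0 ≤ RCLike.re
          (inner ℂ (B (U (s - T) (z_d - stateT U B T τ u y₀))) (u s - v s) : ℂ) := by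
        rw [ae_restrict_iff' measurableSet_Ioo]
        filter_upwards [hform, hvbd] with s hfs hvs hmem'
        have hre1 : RCLike.re
            (inner ℂ (B (U (s - T) (z_d - stateT U B T τ u y₀))) (u s) : ℂ)
              = M * ‖B (U (s - T) (z_d - stateT U B T τ u y₀))‖ := by
          have hus : u s = (M / ‖B (U (s - T) (z_d - stateT U B T τ u y₀))‖) •
              B (U (s - T) (z_d - stateT U B T τ u y₀)) := hfs hmem'
          rw [hus]; exact (OPaux.ptA M hM _).2
        have hre2 : RCLike.re
            (inner ℂ (B (U (s - T) (z_d - stateT U B T τ u y₀))) (v s) : ℂ)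
              ≤ M * ‖B (U (s - T) (z_d - stateT U B T τ u y₀))‖ := by
          calc RCLike.re (inner ℂ (B (U (s - T) (z_d - stateT U B T τ u y₀))) (v s) : ℂ)
              ≤ ‖B (U (s - T) (z_d - stateT U B T τ u y₀))‖ * ‖v s‖ := re_inner_le_norm _ _
            _ ≤ ‖B (U (s - T) (z_d - stateT U B T τ u y₀))‖ * M :=
                mul_le_mul_of_nonneg_left (hvs hmem') (norm_nonneg _)
            _ = M * ‖B (U (s - T) (z_d - stateT U B T τ u y₀))‖ := mul_comm _ _
        rw [inner_sub_right, map_sub]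
        linarith
      have h3 : 0 ≤ RCLike.re (inner ℂ (z_d - stateT U B T τ u y₀)
          (stateT U B T τ u y₀ - stateT U B T τ v y₀) : ℂ) := by
        rw [hdiff u v hintu hintv, hkey]
        exact integral_nonneg_of_ae hpt
      have h4 : (inner ℂ (z_d - stateT U B T τ u y₀) (z_d - stateT U B T τ v y₀) : ℂ)
          = inner ℂ (z_d - stateT U B T τ u y₀) (z_d - stateT U B T τ u y₀)
            + inner ℂ (z_d - stateT U B T τ u y₀)
                (stateT U B T τ u y₀ - stateT U B T τ v y₀) := by
        rw [← inner_add_right]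
        congr 1
        abel
      have h5 := re_inner_le_norm (𝕜 := ℂ) (z_d - stateT U B T τ u y₀)
        (z_d - stateT U B T τ v y₀)
      have h6 : RCLike.re (inner ℂ (z_d - stateT U B T τ u y₀)
            (z_d - stateT U B T τ v y₀) : ℂ)
          = ‖z_d - stateT U B T τ u y₀‖ ^ 2 + RCLike.re
              (inner ℂ (z_d - stateT U B T τ u y₀)
                (stateT U B T τ u y₀ - stateT U B T τ v y₀) : ℂ) := by
        rw [h4, map_add, inner_self_eq_norm_sq]
      have h8 : ‖z_d - stateT U B T τ u y₀‖ ≤ ‖z_d - stateT U B T τ v y₀‖ := by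
        nlinarith
      rwa [norm_sub_rev z_d (stateT U B T τ v y₀)] at h8
    refine ⟨huadm, le_antisymm ?_ ?_⟩
    · simp only [rOP]
      refine le_csInf ⟨_, ⟨u, huadm, rfl⟩⟩ ?_
      rintro x ⟨v, hv, rfl⟩
      rw [norm_sub_rev (stateT U B T τ u y₀) z_d]
      exact hlow v hv
    · simp only [rOP]
      exact csInf_le ⟨0, by rintro x ⟨v, hv, rfl⟩; exact norm_nonneg _⟩ ⟨u, huadm, rfl⟩
  -- the forward implication
  have hfwd : ∀ u : ℝ → H, IsOptOP U B y₀ z_d T M τ u →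
      ∀ᵐ t : ℝ ∂volume, t ∈ Ioo τ T →
        u t = (M / ‖B (adjState U B y₀ z_d T τ u t)‖) • B (adjState U B y₀ z_d T τ u t) := by
    intro u hu
    obtain ⟨⟨hmem, hbd⟩, hopt⟩ := hu
    have hne : stateT U B T τ u y₀ ≠ z_d := hMne u hmem hbd
    obtain ⟨cu, hcu⟩ := hmem.2
    have hintu : IntegrableOn (fun s : ℝ => U (T - s) (B (u s))) (Ioo τ T) volume :=
      OPaux.integrable_integrand hU hmem.1 (hsubI hcu)
    set g : ℝ → H := fun t => B (U (t - T) (z_d - stateT U B T τ u y₀)) with hgdef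
    have hg : ∀ s : ℝ, B (U (s - T) (z_d - stateT U B T τ u y₀)) = g s := fun s => rfl
    have hgc : Continuous g :=
      B.continuous.comp ((hU.2.2.2 _).comp (continuous_id.sub continuous_const))
    set v : ℝ → H := fun t => (M / ‖g t‖) • g t with hvdef
    have hvmeas : AEStronglyMeasurable v (volume : Measure ℝ) :=
      ((measurable_const.div hgc.norm.measurable).aestronglyMeasurable).smul
        hgc.aestronglyMeasurable
    have hvbd : ∀ t, ‖v t‖ ≤ M := fun t => (OPaux.ptA M hM _).1
    have hvadm : v ∈ UadmSet (H := H) M τ T :=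
      ⟨⟨hvmeas, M, ae_of_all _ fun t _ => hvbd t⟩, ae_of_all _ fun t _ => hvbd t⟩
    have hintv : IntegrableOn (fun s : ℝ => U (T - s) (B (v s))) (Ioo τ T) volume :=
      OPaux.integrable_integrand hU hvmeas (ae_of_all _ fun t _ => hvbd t)
    have hintw : IntegrableOn (fun s : ℝ => U (T - s) (B (v s - u s))) (Ioo τ T) volume := by
      simpa [map_sub, Pi.sub_def] using hintv.sub hintu
    have hkey := OPaux.key_re hU hB hintw (z_d - stateT U B T τ u y₀)
    have hD : stateT U B T τ v y₀ - stateT U B T τ u y₀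
        = ∫ s in Ioo τ T, U (T - s) (B (v s - u s)) := hdiff v u hintv hintu
    -- perturbation inequality
    have hstep : ∀ ε : ℝ, 0 < ε → ε ≤ 1 →
        2 * RCLike.re (inner ℂ (z_d - stateT U B T τ u y₀)
            (stateT U B T τ v y₀ - stateT U B T τ u y₀) : ℂ)
          ≤ ε * ‖stateT U B T τ v y₀ - stateT U B T τ u y₀‖ ^ 2 := by
      intro ε hε hε1
      set uε : ℝ → H := fun t => u t + ε • (v t - u t) with huε
      have huεmem : MemLinfty uε 0 T := by
        refine ⟨hmem.1.add ((hvmeas.sub hmem.1).const_smul ε), cu + (M + cu), ?_⟩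
        filter_upwards [hcu] with t h1 h2
        have h3 := h1 h2
        calc ‖uε t‖ ≤ ‖u t‖ + ‖ε • (v t - u t)‖ := norm_add_le _ _
          _ = ‖u t‖ + ε * ‖v t - u t‖ := by
              rw [norm_smul, Real.norm_eq_abs, abs_of_pos hε]
          _ ≤ cu + (M + cu) := by
              have h4 := norm_sub_le (v t) (u t)
              have h5 := hvbd t
              nlinarith [norm_nonneg (v t), norm_nonneg (u t)]
      have huεbd : ∀ᵐ t : ℝ ∂volume, t ∈ Ioo τ T → ‖uε t‖ ≤ M := by
        filter_upwards [hbd] with t h1 h2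
        have h3 := h1 h2
        have hconv : uε t = (1 - ε) • u t + ε • v t := by
          simp only [huε]
          module
        rw [hconv]
        calc ‖(1 - ε) • u t + ε • v t‖ ≤ ‖(1 - ε) • u t‖ + ‖ε • v t‖ := norm_add_le _ _
          _ = (1 - ε) * ‖u t‖ + ε * ‖v t‖ := by
              rw [norm_smul, norm_smul, Real.norm_eq_abs, Real.norm_eq_abs,
                abs_of_nonneg (by linarith : (0:ℝ) ≤ 1 - ε), abs_of_pos hε]
          _ ≤ (1 - ε) * M + ε * M := by
              have h4 := hvbd t
              nlinarith
          _ = M := by ring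
      have hstate : stateT U B T τ uε y₀
          = stateT U B T τ u y₀ + ε • (stateT U B T τ v y₀ - stateT U B T τ u y₀) := by
        have h1 : (fun s : ℝ => U (T - s) (B (uε s)))
            = fun s : ℝ => U (T - s) (B (u s)) + ε • U (T - s) (B (v s - u s)) := by
          funext s
          simp only [huε]
          rw [RCLike.real_smul_eq_coe_smul (K := ℂ) ε, map_add, _root_.map_smul, map_add, _root_.map_smul,
            ← RCLike.real_smul_eq_coe_smul (K := ℂ) ε]
        have h2 : IntegrableOn (fun s : ℝ => ε • U (T - s) (B (v s - u s)))
            (Ioo τ T) volume := hintw.smul ε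
        simp only [stateT]
        rw [h1, integral_add hintu h2, integral_smul,
          show (∫ s in Ioo τ T, U (T - s) (B (v s - u s)))
              = stateT U B T τ v y₀ - stateT U B T τ u y₀ from hD.symm]
        simp only [stateT]
        abel
      have hle : rOP U B y₀ z_d T M τ ≤ ‖stateT U B T τ uε y₀ - z_d‖ := by
        simp only [rOP]
        exact csInf_le ⟨0, by rintro x ⟨q, hq, rfl⟩; exact norm_nonneg _⟩
          ⟨uε, ⟨huεmem, huεbd⟩, rfl⟩
      rw [← hopt, hstate] at hle
      have hre : ‖stateT U B T τ u y₀ - z_d‖ ^ 2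
          ≤ ‖(stateT U B T τ u y₀ - z_d)
              + ε • (stateT U B T τ v y₀ - stateT U B T τ u y₀)‖ ^ 2 := by
        have h7 : stateT U B T τ u y₀ + ε • (stateT U B T τ v y₀ - stateT U B T τ u y₀) - z_d
            = (stateT U B T τ u y₀ - z_d)
              + ε • (stateT U B T τ v y₀ - stateT U B T τ u y₀) := by abel
        rw [h7] at hle
        exact pow_le_pow_left₀ (norm_nonneg _) hle 2
      rw [norm_add_sq (𝕜 := ℂ)] at hre
      have h9 : RCLike.re (inner ℂ (stateT U B T τ u y₀ - z_d)
            (ε • (stateT U B T τ v y₀ - stateT U B T τ u y₀)) : ℂ)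
          = - (ε * RCLike.re (inner ℂ (z_d - stateT U B T τ u y₀)
              (stateT U B T τ v y₀ - stateT U B T τ u y₀) : ℂ)) := by
        rw [RCLike.real_smul_eq_coe_smul (K := ℂ) ε, inner_smul_right, RCLike.re_ofReal_mul]
        have h10 : stateT U B T τ u y₀ - z_d = -(z_d - stateT U B T τ u y₀) := by abel
        rw [h10, inner_neg_left, map_neg]
        ring
      have h11 : ‖ε • (stateT U B T τ v y₀ - stateT U B T τ u y₀)‖ ^ 2
          = ε ^ 2 * ‖stateT U B T τ v y₀ - stateT U B T τ u y₀‖ ^ 2 := by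
        rw [norm_smul, Real.norm_eq_abs, abs_of_pos hε, mul_pow]
      rw [h9, h11] at hre
      have h12 : 0 ≤ - (2 * ε * RCLike.re (inner ℂ (z_d - stateT U B T τ u y₀)
            (stateT U B T τ v y₀ - stateT U B T τ u y₀) : ℂ))
          + ε ^ 2 * ‖stateT U B T τ v y₀ - stateT U B T τ u y₀‖ ^ 2 := by linarith
      nlinarith
    -- conclude `re ⟪η, D⟫ ≤ 0`
    have hDr : RCLike.re (inner ℂ (z_d - stateT U B T τ u y₀)
        (stateT U B T τ v y₀ - stateT U B T τ u y₀) : ℂ) ≤ 0 := by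
      by_contra hcon
      push_neg at hcon
      set r := RCLike.re (inner ℂ (z_d - stateT U B T τ u y₀)
        (stateT U B T τ v y₀ - stateT U B T τ u y₀) : ℂ) with hr
      set D2 := ‖stateT U B T τ v y₀ - stateT U B T τ u y₀‖ ^ 2 with hD2def
      have hD2 : 0 ≤ D2 := sq_nonneg _
      have hεpos : 0 < min 1 (r / (D2 + 1)) :=
        lt_min one_pos (div_pos hcon (by linarith))
      have hs := hstep _ hεpos (min_le_left _ _)
      have h2 : min 1 (r / (D2 + 1)) * D2 ≤ r / (D2 + 1) * D2 :=
        mul_le_mul_of_nonneg_right (min_le_right _ _) hD2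
      have h3 : r / (D2 + 1) * D2 ≤ r := by
        rw [div_mul_eq_mul_div, div_le_iff₀ (by linarith : (0:ℝ) < D2 + 1)]
        nlinarith
      linarith
    -- the integrand is a.e. nonnegative with zero integral
    have hpt2 : ∀ᵐ s : ℝ ∂volume.restrict (Ioo τ T),
        0 ≤ RCLike.re (inner ℂ (g s) (v s - u s) : ℂ) := by
      rw [ae_restrict_iff' measurableSet_Ioo]
      filter_upwards [hbd] with s h1 hmem'
      have hre1 : RCLike.re (inner ℂ (g s) (v s) : ℂ) = M * ‖g s‖ := (OPaux.ptA M hM _).2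
      have hre2 : RCLike.re (inner ℂ (g s) (u s) : ℂ) ≤ M * ‖g s‖ := by
        calc RCLike.re (inner ℂ (g s) (u s) : ℂ) ≤ ‖g s‖ * ‖u s‖ := re_inner_le_norm _ _
          _ ≤ ‖g s‖ * M := mul_le_mul_of_nonneg_left (h1 hmem') (norm_nonneg _)
          _ = M * ‖g s‖ := mul_comm _ _
      rw [inner_sub_right, map_sub]
      linarith
    have hgmeas : AEStronglyMeasurable (fun s : ℝ => RCLike.re (inner ℂ (g s) (v s - u s) : ℂ))
        (volume.restrict (Ioo τ T)) :=
      (RCLike.continuous_re.comp_aestronglyMeasurable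
        ((hgc.aestronglyMeasurable.inner (hvmeas.sub hmem.1)))).restrict
    have hgint : Integrable (fun s : ℝ => RCLike.re (inner ℂ (g s) (v s - u s) : ℂ))
        (volume.restrict (Ioo τ T)) := by
      apply Integrable.mono'
        (integrableOn_const measure_Ioo_lt_top.ne :
          IntegrableOn (fun _ : ℝ => (‖B‖ * ‖z_d - stateT U B T τ u y₀‖) * (M + cu))
            (Ioo τ T) volume) hgmeas
      rw [ae_restrict_iff' measurableSet_Ioo]
      filter_upwards [hsubI hcu] with s h1 hmem'
      have h2 : ‖g s‖ ≤ ‖B‖ * ‖z_d - stateT U B T τ u y₀‖ := by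
        calc ‖g s‖ ≤ ‖B‖ * ‖U (s - T) (z_d - stateT U B T τ u y₀)‖ := B.le_opNorm _
          _ = ‖B‖ * ‖z_d - stateT U B T τ u y₀‖ := by rw [hU.2.2.1]
      have h3 : ‖v s - u s‖ ≤ M + cu := by
        have := norm_sub_le (v s) (u s)
        have := hvbd s
        have := h1 hmem'
        linarith
      calc ‖RCLike.re (inner ℂ (g s) (v s - u s) : ℂ)‖
          ≤ ‖(inner ℂ (g s) (v s - u s) : ℂ)‖ := by
            rw [Real.norm_eq_abs]; exact RCLike.abs_re_le_norm _
        _ ≤ ‖g s‖ * ‖v s - u s‖ := norm_inner_le_norm _ _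
        _ ≤ (‖B‖ * ‖z_d - stateT U B T τ u y₀‖) * (M + cu) := by
            apply mul_le_mul h2 h3 (norm_nonneg _)
            positivity
    have hint0 : ∫ s in Ioo τ T, RCLike.re (inner ℂ (g s) (v s - u s) : ℂ) = 0 := by
      apply le_antisymm
      · have h1 : ∫ s in Ioo τ T, RCLike.re (inner ℂ (g s) (v s - u s) : ℂ)
            = RCLike.re (inner ℂ (z_d - stateT U B T τ u y₀)
                (stateT U B T τ v y₀ - stateT U B T τ u y₀) : ℂ) := by
          rw [hD, hkey]
        rw [h1]
        exact hDr
      · exact integral_nonneg_of_ae hpt2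
    have hg0 := (integral_eq_zero_iff_of_nonneg_ae hpt2 hgint).1 hint0
    rw [Filter.EventuallyEq, ae_restrict_iff' measurableSet_Ioo] at hg0
    filter_upwards [hbd, hg0, hphi u hne] with t h1 h2 h3 hm
    have hgne : g t ≠ 0 := h3 hm
    have h4 : RCLike.re (inner ℂ (g t) (u t) : ℂ) = M * ‖g t‖ := by
      have h5 := h2 hm
      have h6 : RCLike.re (inner ℂ (g t) (v t) : ℂ) = M * ‖g t‖ := (OPaux.ptA M hM _).2
      rw [inner_sub_right, map_sub] at h5
      simp only [Pi.zero_apply] at h5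
      linarith
    exact OPaux.ptC M hM (g t) (u t) hgne (h1 hm) h4
  -- assemble
  refine ⟨fun u => ⟨fun hu => ⟨hu.1.1, hfwd u hu⟩, fun h => hIopt u h.1 h.2⟩, fun u hu => ?_⟩
  exact hphi u (hMne u hu.1.1 hu.1.2)
end
end
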